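/- arXiv:2006.08571 — 5 statements merged into one kernel-verified Lean document; each statement's English description precedes it below -/
import Mathlib

section
/- Let μ, ν be probability measures on finite sets and c a cost function. As ε → 0, the regularized causal optimal transport value K_{c,ε}(μ,ν) (defined as the expected cost under the entropy-regularized optimal causal plan) converges to the unregularized causal optimal transport value K_c(μ,ν) = inf over causal couplings of E^π[c]. -/
open scoped BigOperators

/-- Shannon entropy of a (sub)probability vector on a finite set. -/
noncomputable def shannonEntropy {α : Type*} [Fintype α] (p : α → ℝ) : ℝ :=
  -∑ a, p a * Real.log (p a)

/-- A coupling of `μ` and `ν`. -/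
def IsCouplingOf {A B : Type*} [Fintype A] [Fintype B]
    (μ : A → ℝ) (ν : B → ℝ) (π : A × B → ℝ) : Prop :=
  (∀ p, 0 ≤ π p) ∧ (∀ a, ∑ b, π (a, b) = μ a) ∧ (∀ b, ∑ a, π (a, b) = ν b)

/-- Expected cost `E^π[c]`. -/
noncomputable def expCost {A : Type*} [Fintype A] (π : A → ℝ) (c : A → ℝ) : ℝ :=
  ∑ a, π a * c a

/-- `f` depends only on the coordinates of the path up to (and including) time `t`. -/
def DepOn {Z : Type*} {T : ℕ} (t : ℕ) (f : (Fin T → Z) → ℝ) : Prop :=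
  ∀ z z' : Fin T → Z, (∀ s : Fin T, (s : ℕ) ≤ t → z s = z' s) → f z = f z'

/-- Causality of a coupling on path spaces: for each `t` with `t + 1 < T`,
conditionally on `x_{≤t}`, the past `y_{≤t}` is independent of the whole path `x`. -/
def CausalCoupling {X Y : Type*} {T : ℕ} [Fintype X] [Fintype Y] [DecidableEq X]
    (π : ((Fin T → X) × (Fin T → Y)) → ℝ) : Prop :=
  ∀ t : ℕ, t + 1 < T →
    ∀ f : (Fin T → Y) → ℝ, DepOn t f →
    ∀ g : (Fin T → X) → ℝ, ∀ a : Fin T → X,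
      (∑ p : (Fin T → X) × (Fin T → Y),
          if ∀ s : Fin T, (s : ℕ) ≤ t → p.1 s = a s then π p * f p.2 * g p.1 else 0) *
        (∑ p : (Fin T → X) × (Fin T → Y),
          if ∀ s : Fin T, (s : ℕ) ≤ t → p.1 s = a s then π p else 0)
      = (∑ p : (Fin T → X) × (Fin T → Y),
          if ∀ s : Fin T, (s : ℕ) ≤ t → p.1 s = a s then π p * f p.2 else 0) *
        (∑ p : (Fin T → X) × (Fin T → Y),
          if ∀ s : Fin T, (s : ℕ) ≤ t → p.1 s = a s then π p * g p.1 else 0)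


private lemma sum_prod_if_factor {A B : Type*} [Fintype A] [Fintype B]
    (P : A → Prop) [DecidablePred P] (F : A × B → ℝ) (u : A → ℝ) (v : B → ℝ)
    (h : ∀ p : A × B, F p = u p.1 * v p.2) :
    ∑ p : A × B, (if P p.1 then F p else 0)
      = (∑ a, if P a then u a else 0) * ∑ b, v b := by
  rw [Fintype.sum_prod_type, Finset.sum_mul]
  refine Finset.sum_congr rfl fun a _ => ?_
  by_cases hP : P a <;> simp [hP, h, Finset.mul_sum]

/-- As `ε → 0⁺`, the regularized causal optimal transport value
`K_{c,ε}(μ,ν) = E^{π^K_{c,ε}}[c]` (the expected cost under the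
entropy-regularized optimal causal plan) converges to the unregularized causal
optimal transport value `K_c(μ,ν) = inf_{π causal coupling} E^π[c]`. -/
theorem regularized_causal_OT_tendsto_causal_OT
    {X Y : Type*} {T : ℕ} [Fintype X] [Fintype Y] [DecidableEq X]
    (μ : (Fin T → X) → ℝ) (ν : (Fin T → Y) → ℝ)
    (hμpos : ∀ x, 0 ≤ μ x) (hμsum : ∑ x, μ x = 1)
    (hνpos : ∀ y, 0 ≤ ν y) (hνsum : ∑ y, ν y = 1)
    (c : ((Fin T → X) × (Fin T → Y)) → ℝ)
    -- uniform entropy bound `0 ≤ H(π) ≤ C` over all couplings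
    (C : ℝ) (hC : ∀ π, IsCouplingOf μ ν π → 0 ≤ shannonEntropy π ∧ shannonEntropy π ≤ C)
    -- `πm ε` is the optimizer of the entropy-regularized causal problem
    (πm : ℝ → ((Fin T → X) × (Fin T → Y)) → ℝ)
    (hmem : ∀ ε > (0 : ℝ), IsCouplingOf μ ν (πm ε) ∧ CausalCoupling (πm ε))
    (hmin : ∀ ε > (0 : ℝ), ∀ σ, IsCouplingOf μ ν σ → CausalCoupling σ →
      expCost (πm ε) c - ε * shannonEntropy (πm ε) ≤ expCost σ c - ε * shannonEntropy σ) :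
    Filter.Tendsto (fun ε => expCost (πm ε) c) (nhdsWithin 0 (Set.Ioi 0))
      (nhds (sInf ((fun π => expCost π c) ''
        {π | IsCouplingOf μ ν π ∧ CausalCoupling π}))) := by
  
  classical
  set S := ((fun π => expCost π c) '' {π | IsCouplingOf μ ν π ∧ CausalCoupling π}) with hS
  -- the product coupling is causal
  set ρ : ((Fin T → X) × (Fin T → Y)) → ℝ := fun p => μ p.1 * ν p.2 with hρ
  have hρcoup : IsCouplingOf μ ν ρ := by
    refine ⟨fun p => mul_nonneg (hμpos _) (hνpos _), fun a => ?_, fun b => ?_⟩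
    · simp [hρ, ← Finset.mul_sum, hνsum]
    · simp [hρ, ← Finset.sum_mul, hμsum]
  have hρcausal : CausalCoupling ρ := by
    intro t ht f hf g a
    have e1 := sum_prod_if_factor (fun x : Fin T → X => ∀ s : Fin T, (s : ℕ) ≤ t → x s = a s)
      (fun p => ρ p * f p.2 * g p.1) (fun x => μ x * g x) (fun y => ν y * f y)
      (fun p => by simp only [hρ]; ring)
    have e2 := sum_prod_if_factor (fun x : Fin T → X => ∀ s : Fin T, (s : ℕ) ≤ t → x s = a s)
      ρ μ ν (fun p => rfl)
    have e3 := sum_prod_if_factor (fun x : Fin T → X => ∀ s : Fin T, (s : ℕ) ≤ t → x s = a s)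
      (fun p => ρ p * f p.2) μ (fun y => ν y * f y) (fun p => by simp only [hρ]; ring)
    have e4 := sum_prod_if_factor (fun x : Fin T → X => ∀ s : Fin T, (s : ℕ) ≤ t → x s = a s)
      (fun p => ρ p * g p.1) (fun x => μ x * g x) ν (fun p => by simp only [hρ]; ring)
    rw [e1, e2, e3, e4]
    ring
  have hρS : expCost ρ c ∈ S := ⟨ρ, ⟨hρcoup, hρcausal⟩, rfl⟩
  have hSne : S.Nonempty := ⟨_, hρS⟩
  -- lower bound
  have hbdd : BddBelow S := by
    refine ⟨-∑ p, |c p|, ?_⟩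
    rintro v ⟨π, ⟨⟨hπ0, hπ1, hπ2⟩, -⟩, rfl⟩
    have hπle : ∀ p, π p ≤ 1 := by
      intro p
      have h1 : π p ≤ ∑ b, π (p.1, b) := by
        have := Finset.single_le_sum (f := fun b => π (p.1, b))
          (fun b _ => hπ0 _) (Finset.mem_univ p.2)
        simpa using this
      have h2 : μ p.1 ≤ ∑ x, μ x :=
        Finset.single_le_sum (fun x _ => hμpos x) (Finset.mem_univ p.1)
      rw [hπ1] at h1
      linarith [hμsum ▸ h2]
    have : ∀ p ∈ (Finset.univ : Finset ((Fin T → X) × (Fin T → Y))),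
        -|c p| ≤ π p * c p := by
      intro p _
      have habs : |π p * c p| ≤ |c p| := by
        rw [abs_mul, abs_of_nonneg (hπ0 p)]
        nlinarith [abs_nonneg (c p), hπle p, hπ0 p]
      linarith [neg_abs_le (π p * c p)]
    calc -∑ p, |c p| = ∑ p, -|c p| := by rw [Finset.sum_neg_distrib]
      _ ≤ ∑ p, π p * c p := Finset.sum_le_sum this
      _ = expCost π c := rfl
  set I := sInf S with hI
  have h1 : ∀ ε > (0:ℝ), I ≤ expCost (πm ε) c := by
    intro ε hε
    exact csInf_le hbdd ⟨πm ε, ⟨(hmem ε hε).1, (hmem ε hε).2⟩, rfl⟩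
  have h2 : ∀ ε > (0:ℝ), expCost (πm ε) c ≤ I + ε * C := by
    intro ε hε
    have hlb : expCost (πm ε) c - ε * C ≤ I := by
      refine le_csInf hSne ?_
      rintro v ⟨σ, ⟨hσc, hσk⟩, rfl⟩
      have hm := hmin ε hε σ hσc hσk
      have hH1 := hC (πm ε) (hmem ε hε).1
      have hH2 := hC σ hσc
      nlinarith
    linarith
  -- squeeze
  have hlim : Filter.Tendsto (fun ε : ℝ => I + ε * C) (nhdsWithin 0 (Set.Ioi 0)) (nhds I) := by
    have hcont : Filter.Tendsto (fun ε : ℝ => I + ε * C) (nhds 0) (nhds (I + 0 * C)) :=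
      ((continuous_const.add (continuous_id.mul continuous_const)).tendsto 0)
    simpa using hcont.mono_left nhdsWithin_le_nhds
  refine tendsto_of_tendsto_of_tendsto_of_le_of_le' tendsto_const_nhds hlim ?_ ?_
  · exact Filter.eventually_of_mem self_mem_nhdsWithin fun ε hε => h1 ε hε
  · exact Filter.eventually_of_mem self_mem_nhdsWithin fun ε hε => h2 ε hε
end

section
/- A coupling π of μ and ν on product path space is causal if and only if E^π[∑_{t=1}^{T-1} h_t(y_{≤t}) ΔM_{t+1}(x_{≤t+1})] = 0 for all bounded continuous adapted test functions h and all bounded continuous μ-martingales M, where ΔM_{t+1} = M_{t+1}(x_{≤t+1}) - M_t(x_{≤t}). -/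
open scoped BigOperators

/-- `M` is an adapted `μ`-martingale w.r.t. the canonical filtration:
`M t` depends only on coordinates up to time `t`, and
`E^μ[(M_{t+1} - M_t) φ] = 0` for every `φ` depending only on `x_{≤t}`. -/
def IsMuMartingale {X : Type*} {T : ℕ} [Fintype X]
    (μ : (Fin T → X) → ℝ) (M : ℕ → (Fin T → X) → ℝ) : Prop :=
  (∀ t : ℕ, DepOn t (M t)) ∧
  ∀ t : ℕ, t + 1 < T → ∀ φ : (Fin T → X) → ℝ, DepOn t φ →
    ∑ x, μ x * φ x * (M (t + 1) x - M t x) = 0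

set_option linter.unusedSectionVars false

section Helpers

variable {X : Type*} {T : ℕ} [Fintype X] [DecidableEq X]

/-- Projection of a path onto its coordinates up to time `t`. -/
def projUpTo (t : ℕ) (x : Fin T → X) : {s : Fin T // (s : ℕ) ≤ t} → X :=
  fun s => x s.1

lemma projUpTo_eq_iff {t : ℕ} {x a : Fin T → X} :
    projUpTo t x = projUpTo t a ↔ ∀ s : Fin T, (s : ℕ) ≤ t → x s = a s := by
  constructor
  · intro h s hs; exact congrFun h ⟨s, hs⟩
  · intro h; funext s; exact h s.1 s.2

lemma depOn_mono {s t : ℕ} (hst : s ≤ t) {f : (Fin T → X) → ℝ} (hf : DepOn s f) :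
    DepOn t f := by
  intro z z' hz; exact hf z z' fun u hu => hz u (hu.trans hst)

lemma depOn_of_proj {t : ℕ} (F : ({s : Fin T // (s : ℕ) ≤ t} → X) → ℝ) :
    DepOn t (fun x => F (projUpTo t x)) := by
  intro z z' hz
  exact congrArg F (projUpTo_eq_iff.2 hz)

end Helpers

section SumHelpers

variable {X Y : Type*} {T : ℕ} [Fintype X] [Fintype Y] [DecidableEq X]

lemma sum_ite_match (t : ℕ) (a : Fin T → X) (G : (Fin T → X) × (Fin T → Y) → ℝ) :
    (∑ p : (Fin T → X) × (Fin T → Y),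
        if ∀ s : Fin T, (s : ℕ) ≤ t → p.1 s = a s then G p else 0)
      = ∑ p ∈ Finset.univ.filter
          (fun p : (Fin T → X) × (Fin T → Y) => projUpTo t p.1 = projUpTo t a), G p := by
  rw [Finset.sum_filter]
  apply Finset.sum_congr rfl
  intro p _
  exact (if_congr projUpTo_eq_iff.symm rfl rfl)

end SumHelpers
section CondExp

variable {X : Type*} {T : ℕ} [Fintype X] [DecidableEq X]

/-- Discrete conditional expectation of `ψ` given the coordinates up to time `t`,
with respect to `μ`. -/
noncomputable def condExpAt (μ : (Fin T → X) → ℝ) (t : ℕ) (ψ : (Fin T → X) → ℝ)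
    (x : Fin T → X) : ℝ :=
  if (∑ x' ∈ Finset.univ.filter (fun x' => projUpTo t x' = projUpTo t x), μ x') = 0 then 0
  else (∑ x' ∈ Finset.univ.filter (fun x' => projUpTo t x' = projUpTo t x), μ x' * ψ x')
    / (∑ x' ∈ Finset.univ.filter (fun x' => projUpTo t x' = projUpTo t x), μ x')

lemma condExpAt_congr (μ : (Fin T → X) → ℝ) (t : ℕ) (ψ : (Fin T → X) → ℝ)
    {x x' : Fin T → X} (h : projUpTo t x = projUpTo t x') :
    condExpAt μ t ψ x = condExpAt μ t ψ x' := by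
  unfold condExpAt
  rw [h]

lemma depOn_condExpAt (μ : (Fin T → X) → ℝ) (t : ℕ) (ψ : (Fin T → X) → ℝ) :
    DepOn t (condExpAt μ t ψ) := by
  intro z z' hz
  exact condExpAt_congr μ t ψ (projUpTo_eq_iff.2 hz)

/-- Orthogonality: conditional expectation integrates the same against
any `t`-measurable test function. -/
lemma condExpAt_orth (μ : (Fin T → X) → ℝ) (hμpos : ∀ x, 0 ≤ μ x)
    (t : ℕ) (ψ : (Fin T → X) → ℝ) (ξ : (Fin T → X) → ℝ) (hξ : DepOn t ξ) :
    ∑ x, μ x * ξ x * condExpAt μ t ψ x = ∑ x, μ x * ξ x * ψ x := by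
  rw [← Finset.sum_fiberwise Finset.univ (fun x => projUpTo t x)
      (fun x => μ x * ξ x * condExpAt μ t ψ x),
    ← Finset.sum_fiberwise Finset.univ (fun x => projUpTo t x)
      (fun x => μ x * ξ x * ψ x)]
  apply Finset.sum_congr rfl
  intro b _
  rcases Finset.eq_empty_or_nonempty
      (Finset.univ.filter (fun x : Fin T → X => projUpTo t x = b)) with he | ⟨x₀, hx₀⟩
  · rw [he]; simp
  · have hx₀b : projUpTo t x₀ = b := (Finset.mem_filter.1 hx₀).2
    -- rewrite the fiber in terms of x₀
    have hfib : Finset.univ.filter (fun x : Fin T → X => projUpTo t x = b)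
        = Finset.univ.filter (fun x : Fin T → X => projUpTo t x = projUpTo t x₀) := by
      rw [hx₀b]
    set A := ∑ x' ∈ Finset.univ.filter
        (fun x' : Fin T → X => projUpTo t x' = projUpTo t x₀), μ x' with hA
    set N := ∑ x' ∈ Finset.univ.filter
        (fun x' : Fin T → X => projUpTo t x' = projUpTo t x₀), μ x' * ψ x' with hN
    have hconst : ∀ x ∈ Finset.univ.filter
        (fun x : Fin T → X => projUpTo t x = projUpTo t x₀),
        ξ x = ξ x₀ ∧ condExpAt μ t ψ x = condExpAt μ t ψ x₀ := by
      intro x hx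
      have hpx : projUpTo t x = projUpTo t x₀ := (Finset.mem_filter.1 hx).2
      exact ⟨hξ x x₀ (projUpTo_eq_iff.1 hpx), condExpAt_congr μ t ψ hpx⟩
    rw [hfib]
    have hL : ∑ x ∈ Finset.univ.filter
        (fun x : Fin T → X => projUpTo t x = projUpTo t x₀),
        μ x * ξ x * condExpAt μ t ψ x = A * (ξ x₀ * condExpAt μ t ψ x₀) := by
      rw [hA, Finset.sum_mul]
      apply Finset.sum_congr rfl
      intro x hx
      rw [(hconst x hx).1, (hconst x hx).2]; ring
    rw [hL]
    have hc : condExpAt μ t ψ x₀ = if A = 0 then 0 else N / A := rfl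
    by_cases hA0 : A = 0
    · rw [hc, if_pos hA0, hA0]
      have hz : ∀ x ∈ Finset.univ.filter
          (fun x : Fin T → X => projUpTo t x = projUpTo t x₀), μ x = 0 :=
        (Finset.sum_eq_zero_iff_of_nonneg (fun x _ => hμpos x)).1 hA0
      rw [Finset.sum_eq_zero]
      · ring
      · intro x hx; rw [hz x hx]; ring
    · rw [hc, if_neg hA0]
      have hR : ∑ x ∈ Finset.univ.filter
          (fun x : Fin T → X => projUpTo t x = projUpTo t x₀),
          μ x * ξ x * ψ x = ξ x₀ * N := by
        rw [hN, Finset.mul_sum]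
        apply Finset.sum_congr rfl
        intro x hx
        rw [(hconst x hx).1]; ring
      rw [hR]
      field_simp

end CondExp
section Mart

variable {X : Type*} {T : ℕ} [Fintype X] [DecidableEq X]

lemma condExpAt_martingale (μ : (Fin T → X) → ℝ) (hμpos : ∀ x, 0 ≤ μ x)
    (ψ : (Fin T → X) → ℝ) (s : ℕ) (φ : (Fin T → X) → ℝ) (hφ : DepOn s φ) :
    ∑ x, μ x * φ x * (condExpAt μ (s + 1) ψ x - condExpAt μ s ψ x) = 0 := by
  have h1 := condExpAt_orth μ hμpos (s + 1) ψ φ (depOn_mono (Nat.le_succ s) hφ)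
  have h2 := condExpAt_orth μ hμpos s ψ φ hφ
  simp only [mul_sub, Finset.sum_sub_distrib]
  rw [h1, h2, sub_self]

lemma fiber_singleton (x : Fin T → X) :
    Finset.univ.filter (fun x' : Fin T → X => projUpTo (T - 1) x' = projUpTo (T - 1) x)
      = {x} := by
  ext x'
  simp only [Finset.mem_filter, Finset.mem_univ, true_and, Finset.mem_singleton]
  rw [projUpTo_eq_iff]
  constructor
  · intro h
    funext u
    exact h u (by omega)
  · intro h u _
    rw [h]

lemma condExpAt_last (μ : (Fin T → X) → ℝ) (ψ : (Fin T → X) → ℝ)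
    (x : Fin T → X) (hx : μ x ≠ 0) :
    condExpAt μ (T - 1) ψ x = ψ x := by
  unfold condExpAt
  rw [fiber_singleton x, Finset.sum_singleton, Finset.sum_singleton, if_neg hx]
  field_simp

end Mart

section Marg

variable {X Y : Type*} {T : ℕ} [Fintype X] [Fintype Y] [DecidableEq X]

lemma sum_marg (μ : (Fin T → X) → ℝ) (π : ((Fin T → X) × (Fin T → Y)) → ℝ)
    (hm : ∀ a, ∑ b, π (a, b) = μ a)
    (q : (Fin T → X) → Prop) [DecidablePred q] (G : (Fin T → X) → ℝ) :
    ∑ p ∈ Finset.univ.filter (fun p : (Fin T → X) × (Fin T → Y) => q p.1),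
        π p * G p.1
      = ∑ x ∈ Finset.univ.filter q, μ x * G x := by
  rw [Finset.sum_filter, Finset.sum_filter, Fintype.sum_prod_type]
  apply Finset.sum_congr rfl
  intro x _
  by_cases hq : q x
  · simp only [hq, if_true]
    rw [← hm x, Finset.sum_mul]
  · simp [hq]

end Marg
section MainFwd

variable {X Y : Type*} {T : ℕ} [Fintype X] [Fintype Y] [DecidableEq X]

lemma forward_inner
    (μ : (Fin T → X) → ℝ) (π : ((Fin T → X) × (Fin T → Y)) → ℝ)
    (hπpos : ∀ p, 0 ≤ π p) (hπμ : ∀ a, ∑ b, π (a, b) = μ a)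
    (hc : CausalCoupling π) (t : ℕ) (htT : t + 1 < T)
    (f : (Fin T → Y) → ℝ) (hf : DepOn t f)
    (Δ : (Fin T → X) → ℝ)
    (hmart : ∀ φ : (Fin T → X) → ℝ, DepOn t φ → ∑ x, μ x * φ x * Δ x = 0) :
    ∑ p : (Fin T → X) × (Fin T → Y), π p * (f p.2 * Δ p.1) = 0 := by
  classical
  set A : ({s : Fin T // (s : ℕ) ≤ t} → X) → ℝ :=
    fun b => ∑ p ∈ Finset.univ.filter
      (fun p : (Fin T → X) × (Fin T → Y) => projUpTo t p.1 = b), π p with hA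
  set B : ({s : Fin T // (s : ℕ) ≤ t} → X) → ℝ :=
    fun b => ∑ p ∈ Finset.univ.filter
      (fun p : (Fin T → X) × (Fin T → Y) => projUpTo t p.1 = b), π p * f p.2 with hB
  set φ : (Fin T → X) → ℝ :=
    fun x => if A (projUpTo t x) = 0 then 0 else B (projUpTo t x) / A (projUpTo t x) with hφ
  have hφdep : DepOn t φ :=
    depOn_of_proj (fun b => if A b = 0 then 0 else B b / A b)
  have step1 : ∑ p : (Fin T → X) × (Fin T → Y), π p * (f p.2 * Δ p.1)
      = ∑ p : (Fin T → X) × (Fin T → Y), π p * (φ p.1 * Δ p.1) := by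
    rw [← Finset.sum_fiberwise Finset.univ
        (fun p : (Fin T → X) × (Fin T → Y) => projUpTo t p.1)
        (fun p => π p * (f p.2 * Δ p.1)),
      ← Finset.sum_fiberwise Finset.univ
        (fun p : (Fin T → X) × (Fin T → Y) => projUpTo t p.1)
        (fun p => π p * (φ p.1 * Δ p.1))]
    apply Finset.sum_congr rfl
    intro b _
    set fib := Finset.univ.filter
      (fun p : (Fin T → X) × (Fin T → Y) => projUpTo t p.1 = b) with hfib
    have hφfib : ∀ p ∈ fib, φ p.1 = if A b = 0 then 0 else B b / A b := by
      intro p hp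
      have : projUpTo t p.1 = b := (Finset.mem_filter.1 hp).2
      simp only [hφ, this]
    have hRHS : ∑ p ∈ fib, π p * (φ p.1 * Δ p.1)
        = (if A b = 0 then 0 else B b / A b) * ∑ p ∈ fib, π p * Δ p.1 := by
      rw [Finset.mul_sum]
      apply Finset.sum_congr rfl
      intro p hp
      rw [hφfib p hp]; ring
    rw [hRHS]
    by_cases hA0 : A b = 0
    · have hz : ∀ p ∈ fib, π p = 0 :=
        (Finset.sum_eq_zero_iff_of_nonneg (fun p _ => hπpos p)).1 hA0
      rw [if_pos hA0, zero_mul]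
      apply Finset.sum_eq_zero
      intro p hp; rw [hz p hp]; ring
    · rw [if_neg hA0]
      have hne : fib.Nonempty := by
        by_contra hemp
        rw [Finset.not_nonempty_iff_eq_empty] at hemp
        apply hA0
        rw [hA]
        simp only at hemp ⊢
        rw [show (Finset.univ.filter
          (fun p : (Fin T → X) × (Fin T → Y) => projUpTo t p.1 = b)) = ∅ from hemp]
        simp
      obtain ⟨p₀, hp₀⟩ := hne
      have hb : projUpTo t p₀.1 = b := (Finset.mem_filter.1 hp₀).2
      have hcaus := hc t htT f hf Δ p₀.1
      rw [sum_ite_match, sum_ite_match, sum_ite_match, sum_ite_match, hb] at hcaus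
      -- hcaus : (∑ fib, π p * f p.2 * Δ p.1) * A b = B b * (∑ fib, π p * Δ p.1)
      have hLHS : ∑ p ∈ fib, π p * (f p.2 * Δ p.1)
          = ∑ p ∈ fib, π p * f p.2 * Δ p.1 := by
        apply Finset.sum_congr rfl; intro p _; ring
      rw [hLHS]
      have := hcaus
      field_simp
      linarith [hcaus]
  rw [step1]
  have step2 : ∑ p : (Fin T → X) × (Fin T → Y), π p * (φ p.1 * Δ p.1)
      = ∑ x, μ x * φ x * Δ x := by
    rw [Fintype.sum_prod_type]
    apply Finset.sum_congr rfl
    intro x _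
    rw [← hπμ x, Finset.sum_mul, Finset.sum_mul]
    apply Finset.sum_congr rfl
    intro y _
    ring
  rw [step2]
  exact hmart φ hφdep

end MainFwd
section MainBwd

variable {X Y : Type*} {T : ℕ} [Fintype X] [Fintype Y] [DecidableEq X]

lemma backward_causal
    (μ : (Fin T → X) → ℝ) (hμpos : ∀ x, 0 ≤ μ x)
    (π : ((Fin T → X) × (Fin T → Y)) → ℝ)
    (hπpos : ∀ p, 0 ≤ π p) (hπμ : ∀ a, ∑ b, π (a, b) = μ a)
    (H : ∀ (h : ℕ → (Fin T → Y) → ℝ) (M : ℕ → (Fin T → X) → ℝ),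
        (∀ t : ℕ, DepOn t (h t)) → IsMuMartingale μ M →
        ∑ p : (Fin T → X) × (Fin T → Y),
          π p * (∑ t ∈ Finset.range (T - 1), h t p.2 * (M (t + 1) p.1 - M t p.1)) = 0) :
    CausalCoupling π := by
  classical
  intro t htT f hf g a
  rw [sum_ite_match, sum_ite_match, sum_ite_match, sum_ite_match]
  set b₀ := projUpTo t a with hb₀
  set fib := Finset.univ.filter
    (fun p : (Fin T → X) × (Fin T → Y) => projUpTo t p.1 = b₀) with hfib
  set A := ∑ p ∈ fib, π p with hA
  by_cases hA0 : A = 0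
  · have hz : ∀ p ∈ fib, π p = 0 :=
      (Finset.sum_eq_zero_iff_of_nonneg (fun p _ => hπpos p)).1 hA0
    have h2 : ∑ p ∈ fib, π p * f p.2 = 0 :=
      Finset.sum_eq_zero (fun p hp => by rw [hz p hp]; ring)
    rw [hA0, h2, zero_mul, mul_zero]
  · -- main case
    set χ : (Fin T → X) → ℝ := fun x => if projUpTo t x = b₀ then (1:ℝ) else 0 with hχ
    set g' : (Fin T → X) → ℝ := fun x => χ x * g x with hg'
    set M : ℕ → (Fin T → X) → ℝ := fun s => condExpAt μ s g' with hM
    have hMart : IsMuMartingale μ M :=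
      ⟨fun s => depOn_condExpAt μ s g',
       fun s _ φ hφ => condExpAt_martingale μ hμpos g' s φ hφ⟩
    set h : ℕ → (Fin T → Y) → ℝ := fun s y => if t ≤ s then f y else 0 with hh
    have hhdep : ∀ s, DepOn s (h s) := by
      intro s z z' hz
      simp only [hh]
      by_cases hts : t ≤ s
      · rw [if_pos hts, if_pos hts]
        exact depOn_mono hts hf z z' hz
      · rw [if_neg hts, if_neg hts]
    have key := H h M hhdep hMart
    have hIco : (Finset.range (T-1)).filter (fun s => t ≤ s) = Finset.Ico t (T-1) := by
      ext s
      simp only [Finset.mem_filter, Finset.mem_range, Finset.mem_Ico]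
      tauto
    have htel : ∀ p : (Fin T → X) × (Fin T → Y),
        (∑ s ∈ Finset.range (T-1), h s p.2 * (M (s+1) p.1 - M s p.1))
          = f p.2 * M (T-1) p.1 - f p.2 * M t p.1 := by
      intro p
      have e1 : ∀ s ∈ Finset.range (T-1), h s p.2 * (M (s+1) p.1 - M s p.1)
          = if t ≤ s then f p.2 * (M (s+1) p.1 - M s p.1) else 0 := by
        intro s _
        simp only [hh]
        by_cases hts : t ≤ s
        · rw [if_pos hts, if_pos hts]
        · rw [if_neg hts, if_neg hts, zero_mul]
      rw [Finset.sum_congr rfl e1, ← Finset.sum_filter, hIco, ← Finset.mul_sum]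
      have htle : t ≤ T - 1 := by omega
      rw [Finset.sum_Ico_eq_sub _ htle,
        Finset.sum_range_sub (fun s => M s p.1),
        Finset.sum_range_sub (fun s => M s p.1)]
      ring
    have key' : ∑ p : (Fin T → X) × (Fin T → Y),
        (π p * f p.2 * M (T-1) p.1 - π p * f p.2 * M t p.1) = 0 := by
      rw [← key]
      apply Finset.sum_congr rfl
      intro p _
      rw [htel p]; ring
    rw [Finset.sum_sub_distrib] at key'
    have hμne : ∀ p : (Fin T → X) × (Fin T → Y), π p ≠ 0 → μ p.1 ≠ 0 := by
      intro p hp hμ0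
      have h1 : π p ≤ μ p.1 := by
        rw [← hπμ p.1]
        have := Finset.single_le_sum (f := fun y => π (p.1, y))
          (fun y _ => hπpos _) (Finset.mem_univ p.2)
        simpa using this
      have h0 : 0 < π p := lt_of_le_of_ne (hπpos p) (Ne.symm hp)
      rw [hμ0] at h1
      linarith
    have hE1 : ∑ p : (Fin T → X) × (Fin T → Y), π p * f p.2 * M (T-1) p.1
        = ∑ p ∈ fib, π p * f p.2 * g p.1 := by
      have e : ∀ p : (Fin T → X) × (Fin T → Y), π p * f p.2 * M (T-1) p.1
          = if projUpTo t p.1 = b₀ then π p * f p.2 * g p.1 else 0 := by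
        intro p
        by_cases hp0 : π p = 0
        · rw [hp0]; simp
        · have hlast : M (T-1) p.1 = g' p.1 := condExpAt_last μ g' p.1 (hμne p hp0)
          rw [hlast]
          simp only [hg', hχ]
          by_cases hpb : projUpTo t p.1 = b₀
          · rw [if_pos hpb, if_pos hpb]; ring
          · rw [if_neg hpb, if_neg hpb]; ring
      rw [Finset.sum_congr rfl (fun p _ => e p), ← Finset.sum_filter]
    have hAμ : ∑ x ∈ Finset.univ.filter (fun x : Fin T → X => projUpTo t x = b₀), μ x
        = A := by
      have h1 := sum_marg μ π hπμ (fun x => projUpTo t x = b₀) (fun _ => (1:ℝ))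
      simp only [mul_one] at h1
      rw [← h1, hA]
    set S3 := ∑ p ∈ fib, π p * g p.1 with hS3
    have hBμ : ∑ x ∈ Finset.univ.filter (fun x : Fin T → X => projUpTo t x = b₀),
        μ x * g x = S3 := (sum_marg μ π hπμ _ g).symm
    have hMt : ∀ x : Fin T → X, condExpAt μ t g' x
        = if projUpTo t x = b₀ then S3 / A else 0 := by
      intro x
      by_cases hxb : projUpTo t x = b₀
      · rw [if_pos hxb]
        unfold condExpAt
        simp only [hxb]
        have hnum : ∑ x' ∈ Finset.univ.filter
            (fun x' : Fin T → X => projUpTo t x' = b₀), μ x' * g' x'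
            = ∑ x' ∈ Finset.univ.filter
            (fun x' : Fin T → X => projUpTo t x' = b₀), μ x' * g x' := by
          apply Finset.sum_congr rfl
          intro x' hx'
          have : projUpTo t x' = b₀ := (Finset.mem_filter.1 hx').2
          simp only [hg', hχ, if_pos this]
          ring
        rw [hnum, hAμ, hBμ, if_neg hA0]
      · rw [if_neg hxb]
        unfold condExpAt
        have hnum : ∑ x' ∈ Finset.univ.filter
            (fun x' : Fin T → X => projUpTo t x' = projUpTo t x), μ x' * g' x' = 0 := by
          apply Finset.sum_eq_zero
          intro x' hx'
          have hpx : projUpTo t x' = projUpTo t x := (Finset.mem_filter.1 hx').2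
          have : χ x' = 0 := by
            simp only [hχ]
            rw [if_neg (by rw [hpx]; exact hxb)]
          simp only [hg', this]
          ring
        rw [hnum]
        split <;> simp
    have hE2 : ∑ p : (Fin T → X) × (Fin T → Y), π p * f p.2 * M t p.1
        = (∑ p ∈ fib, π p * f p.2) * (S3 / A) := by
      have e : ∀ p : (Fin T → X) × (Fin T → Y), π p * f p.2 * M t p.1
          = if projUpTo t p.1 = b₀ then π p * f p.2 * (S3 / A) else 0 := by
        intro p
        have : M t p.1 = if projUpTo t p.1 = b₀ then S3 / A else 0 := hMt p.1
        rw [this]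
        by_cases hpb : projUpTo t p.1 = b₀
        · rw [if_pos hpb, if_pos hpb]
        · rw [if_neg hpb, if_neg hpb, mul_zero]
      rw [Finset.sum_congr rfl (fun p _ => e p), ← Finset.sum_filter, Finset.sum_mul]
    rw [hE1, hE2] at key'
    have hfin : (∑ p ∈ fib, π p * f p.2 * g p.1)
        = (∑ p ∈ fib, π p * f p.2) * (S3 / A) := by linarith
    rw [hfin]
    field_simp

end MainBwd
/-- A coupling `π` of `μ` and `ν` on product path space is causal if and only if
`E^π[∑_{t} h_t(y_{≤t}) ΔM_{t+1}(x_{≤t+1})] = 0` for all adapted test functions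
`h` and all `μ`-martingales `M`, where `ΔM_{t+1} = M_{t+1} - M_t`. -/
theorem causal_iff_martingale_test
    {X Y : Type*} {T : ℕ} [Fintype X] [Fintype Y] [DecidableEq X]
    (μ : (Fin T → X) → ℝ) (ν : (Fin T → Y) → ℝ)
    (hμpos : ∀ x, 0 ≤ μ x) (hμsum : ∑ x, μ x = 1)
    (hνpos : ∀ y, 0 ≤ ν y) (hνsum : ∑ y, ν y = 1)
    (π : ((Fin T → X) × (Fin T → Y)) → ℝ) (hπ : IsCouplingOf μ ν π) :
    CausalCoupling π ↔
      ∀ (h : ℕ → (Fin T → Y) → ℝ) (M : ℕ → (Fin T → X) → ℝ),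
        (∀ t : ℕ, DepOn t (h t)) → IsMuMartingale μ M →
        ∑ p : (Fin T → X) × (Fin T → Y),
          π p * (∑ t ∈ Finset.range (T - 1), h t p.2 * (M (t + 1) p.1 - M t p.1)) = 0 := by
  obtain ⟨hπpos, hπμ, hπν⟩ := hπ
  constructor
  · intro hc h M hdep hMmart
    obtain ⟨hMdep, hMm⟩ := hMmart
    have hswap : ∑ p : (Fin T → X) × (Fin T → Y),
        π p * (∑ t ∈ Finset.range (T - 1), h t p.2 * (M (t + 1) p.1 - M t p.1))
        = ∑ t ∈ Finset.range (T - 1), ∑ p : (Fin T → X) × (Fin T → Y),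
            π p * (h t p.2 * (M (t + 1) p.1 - M t p.1)) := by
      simp_rw [Finset.mul_sum]
      rw [Finset.sum_comm]
    rw [hswap]
    apply Finset.sum_eq_zero
    intro t ht
    have htT : t + 1 < T := by
      have := Finset.mem_range.1 ht
      omega
    exact forward_inner μ π hπpos hπμ hc t htT (h t) (hdep t)
      (fun x => M (t + 1) x - M t x) (fun φ hφ => hMm t htT φ hφ)
  · intro H
    exact backward_causal μ hμpos π hπpos hπμ H
end

section
/- For a causal coupling π of μ and ν, and any l of the form l(x,y) = ∑_j ∑_{t=1}^{T-1} h^j_t(y_{≤t}) Δ_{t+1}M^j(x_{≤t+1}) with h^j adapted bounded and M^j μ-martingales, one has E^π[l(x,y)] = 0; conversely if π is not causal there exists such an l with E^π[l] > 0, so sup_{l∈L(μ)} E^π[l(x,y)] equals 0 if π is causal and +∞ otherwise (since L(μ) is a cone). -/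
open scoped BigOperators

/-- Membership in the set `L(μ)` of causality test functions:
`l(x,y) = ∑_j ∑_{t=1}^{T-1} h^j_t(y_{≤t}) Δ_{t+1}M^j(x_{≤t+1})`
with `h^j` adapted bounded and `M^j` adapted `μ`-martingales. -/
def InLmu {X Y : Type*} {T : ℕ} [Fintype X] [Fintype Y]
    (μ : (Fin T → X) → ℝ) (l : ((Fin T → X) × (Fin T → Y)) → ℝ) : Prop :=
  ∃ (J : ℕ) (h : Fin J → ℕ → (Fin T → Y) → ℝ) (M : Fin J → ℕ → (Fin T → X) → ℝ),
    (∀ j t, DepOn t (h j t)) ∧ (∀ j, IsMuMartingale μ (M j)) ∧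
    l = fun p => ∑ j, ∑ t ∈ Finset.range (T - 1), h j t p.2 * (M j (t + 1) p.1 - M j t p.1)

section CausalAux

variable {X Y : Type*} {T : ℕ} [Fintype X] [Fintype Y] [DecidableEq X]

lemma depOn_mono_s6 {Z : Type*} {t t' : ℕ} (h : t ≤ t') {f : (Fin T → Z) → ℝ}
    (hf : DepOn t f) : DepOn t' f :=
  fun z z' hz => hf z z' fun s hs => hz s (hs.trans h)

lemma nonemptyX_of_sum_one (hT : 0 < T) (μ : (Fin T → X) → ℝ)
    (h1 : ∑ x, μ x = 1) : Nonempty X := by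
  by_contra h
  haveI : IsEmpty (Fin T → X) := ⟨fun f => h ⟨f ⟨0, hT⟩⟩⟩
  rw [Finset.univ_eq_empty, Finset.sum_empty] at h1
  exact absurd h1 (by norm_num)

lemma couplingMarg1 (μ : (Fin T → X) → ℝ) (π : ((Fin T → X) × (Fin T → Y)) → ℝ)
    (hm : ∀ a, ∑ b, π (a, b) = μ a) (c : (Fin T → X) → Prop) [DecidablePred c] :
    (∑ p : (Fin T → X) × (Fin T → Y), if c p.1 then π p else 0)
      = ∑ x, if c x then μ x else 0 := by
  rw [Fintype.sum_prod_type]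
  refine Finset.sum_congr rfl fun x _ => ?_
  by_cases hc : c x
  · simp only [hc, if_true]; exact hm x
  · simp [hc]

lemma couplingMarg (μ : (Fin T → X) → ℝ) (π : ((Fin T → X) × (Fin T → Y)) → ℝ)
    (hm : ∀ a, ∑ b, π (a, b) = μ a) (c : (Fin T → X) → Prop) [DecidablePred c]
    (w : (Fin T → X) → ℝ) :
    (∑ p : (Fin T → X) × (Fin T → Y), if c p.1 then π p * w p.1 else 0)
      = ∑ x, if c x then μ x * w x else 0 := by
  rw [Fintype.sum_prod_type]
  refine Finset.sum_congr rfl fun x _ => ?_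
  by_cases hc : c x
  · simp only [hc, if_true]; rw [← Finset.sum_mul, hm x]
  · simp [hc]

lemma svanish (μ : (Fin T → X) → ℝ) (ν : (Fin T → Y) → ℝ)
    (π : ((Fin T → X) × (Fin T → Y)) → ℝ)
    (hπ : IsCouplingOf μ ν π) (hc : CausalCoupling π)
    (t : ℕ) (ht : t + 1 < T) (h : (Fin T → Y) → ℝ) (hh : DepOn t h)
    (M : ℕ → (Fin T → X) → ℝ) (hM : IsMuMartingale μ M) (a : Fin T → X) :
    (∑ p : (Fin T → X) × (Fin T → Y),
        if ∀ s : Fin T, (s : ℕ) ≤ t → p.1 s = a s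
        then π p * h p.2 * (M (t + 1) p.1 - M t p.1) else 0) = 0 := by
  have key := hc t ht h hh (fun x => M (t + 1) x - M t x) a
  have hφ : DepOn t (fun x : Fin T → X =>
      if ∀ s : Fin T, (s : ℕ) ≤ t → x s = a s then (1 : ℝ) else 0) := by
    intro z z' hz
    have hiff : (∀ s : Fin T, (s : ℕ) ≤ t → z s = a s) ↔
        (∀ s : Fin T, (s : ℕ) ≤ t → z' s = a s) := by
      constructor <;> intro hcz s hs
      · rw [← hz s hs]; exact hcz s hs
      · rw [hz s hs]; exact hcz s hs
    simp only [hiff]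
  have hzero : (∑ p : (Fin T → X) × (Fin T → Y),
      if ∀ s : Fin T, (s : ℕ) ≤ t → p.1 s = a s
      then π p * (M (t + 1) p.1 - M t p.1) else 0) = 0 := by
    rw [couplingMarg μ π hπ.2.1 (fun x => ∀ s : Fin T, (s : ℕ) ≤ t → x s = a s)
      (fun x => M (t + 1) x - M t x)]
    refine (Finset.sum_congr rfl fun x _ => ?_).trans (hM.2 t ht _ hφ)
    by_cases hcx : (∀ s : Fin T, (s : ℕ) ≤ t → x s = a s)
    · simp only [if_pos hcx, mul_one]
    · simp only [if_neg hcx, mul_zero, zero_mul]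
  rw [hzero, mul_zero] at key
  rcases mul_eq_zero.mp key with h0 | h0
  · exact h0
  · refine Finset.sum_eq_zero fun p _ => ?_
    by_cases hcp : (∀ s : Fin T, (s : ℕ) ≤ t → p.1 s = a s)
    · have hp0 : π p = 0 := by
        have hall := (Finset.sum_eq_zero_iff_of_nonneg
          (fun q _ => by split
                         · exact hπ.1 q
                         · exact le_rfl)).mp h0 p (Finset.mem_univ p)
        rwa [if_pos hcp] at hall
      rw [if_pos hcp, hp0, zero_mul, zero_mul]
    · exact if_neg hcp


lemma causal_term_zero (μ : (Fin T → X) → ℝ) (ν : (Fin T → Y) → ℝ)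
    (π : ((Fin T → X) × (Fin T → Y)) → ℝ)
    (hπ : IsCouplingOf μ ν π) (hc : CausalCoupling π) (hμsum : ∑ x, μ x = 1)
    (t : ℕ) (ht : t + 1 < T) (h : (Fin T → Y) → ℝ) (hh : DepOn t h)
    (M : ℕ → (Fin T → X) → ℝ) (hM : IsMuMartingale μ M) :
    ∑ p : (Fin T → X) × (Fin T → Y),
      π p * (h p.2 * (M (t + 1) p.1 - M t p.1)) = 0 := by
  have hT : 0 < T := by omega
  obtain ⟨x₀⟩ := nonemptyX_of_sum_one hT μ hμsum
  set k : ((Fin T → X) × (Fin T → Y)) → (Fin T → X) :=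
    fun p s => if (s : ℕ) ≤ t then p.1 s else x₀ with hk
  rw [← Finset.sum_fiberwise Finset.univ k
    (fun p => π p * (h p.2 * (M (t + 1) p.1 - M t p.1)))]
  refine Finset.sum_eq_zero fun b _ => ?_
  rw [Finset.sum_filter]
  by_cases hb : ∀ u : Fin T, ¬ (u : ℕ) ≤ t → b u = x₀
  · have hiff : ∀ p : (Fin T → X) × (Fin T → Y),
        (k p = b) ↔ (∀ s : Fin T, (s : ℕ) ≤ t → p.1 s = b s) := by
      intro p
      constructor
      · intro hkp s hs
        rw [← hkp]; simp [hk, hs]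
      · intro hps; funext u
        by_cases hu : (u : ℕ) ≤ t
        · simp [hk, hu, hps u hu]
        · simp [hk, hu, hb u hu]
    refine (Finset.sum_congr rfl fun p _ => ?_).trans
      (svanish μ ν π hπ hc t ht h hh M hM b)
    by_cases hcp : (∀ s : Fin T, (s : ℕ) ≤ t → p.1 s = b s)
    · rw [if_pos ((hiff p).mpr hcp), if_pos hcp, mul_assoc]
    · rw [if_neg (fun hkp => hcp ((hiff p).mp hkp)), if_neg hcp]
  · push_neg at hb
    obtain ⟨u, hu, hbu⟩ := hb
    refine Finset.sum_eq_zero fun p _ => ?_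
    refine if_neg fun hkp => hbu ?_
    rw [← hkp]; simp [hk, hu]

end CausalAux

section DoobAux

variable {X : Type*} {T : ℕ} [Fintype X] [DecidableEq X]

noncomputable def condDen (μ : (Fin T → X) → ℝ) (s : ℕ) (x : Fin T → X) : ℝ :=
  ∑ x', if ∀ u : Fin T, (u : ℕ) ≤ s → x' u = x u then μ x' else 0

noncomputable def condNum (μ : (Fin T → X) → ℝ) (G : (Fin T → X) → ℝ)
    (s : ℕ) (x : Fin T → X) : ℝ :=
  ∑ x', if ∀ u : Fin T, (u : ℕ) ≤ s → x' u = x u then μ x' * G x' else 0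

noncomputable def doob (μ : (Fin T → X) → ℝ) (G : (Fin T → X) → ℝ)
    (s : ℕ) (x : Fin T → X) : ℝ :=
  if condDen μ s x = 0 then 0 else condNum μ G s x / condDen μ s x

lemma cond_iff_of_agree {s : ℕ} {z z' : Fin T → X}
    (hz : ∀ u : Fin T, (u : ℕ) ≤ s → z u = z' u) (x' : Fin T → X) :
    (∀ u : Fin T, (u : ℕ) ≤ s → x' u = z u) ↔ (∀ u : Fin T, (u : ℕ) ≤ s → x' u = z' u) := by
  constructor <;> intro hx u hu
  · rw [← hz u hu]; exact hx u hu
  · rw [hz u hu]; exact hx u hu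

lemma condDen_depOn (μ : (Fin T → X) → ℝ) (s : ℕ) : DepOn s (condDen μ s) := by
  intro z z' hz
  exact Finset.sum_congr rfl fun x' _ => if_congr (cond_iff_of_agree hz x') rfl rfl

lemma condNum_depOn (μ G : (Fin T → X) → ℝ) (s : ℕ) : DepOn s (condNum μ G s) := by
  intro z z' hz
  exact Finset.sum_congr rfl fun x' _ => if_congr (cond_iff_of_agree hz x') rfl rfl

lemma doob_depOn (μ G : (Fin T → X) → ℝ) (s : ℕ) : DepOn s (doob μ G s) := by
  intro z z' hz
  unfold doob
  rw [condDen_depOn μ s z z' hz, condNum_depOn μ G s z z' hz]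

lemma condDen_nonneg (μ : (Fin T → X) → ℝ) (hμ : ∀ x, 0 ≤ μ x) (s : ℕ) (x : Fin T → X) :
    0 ≤ condDen μ s x :=
  Finset.sum_nonneg fun x' _ => by split
                                   · exact hμ x'
                                   · exact le_rfl

lemma mu_eq_zero_of_condDen (μ : (Fin T → X) → ℝ) (hμ : ∀ x, 0 ≤ μ x) {s : ℕ}
    {x : Fin T → X} (hd : condDen μ s x = 0) {x' : Fin T → X}
    (hx' : ∀ u : Fin T, (u : ℕ) ≤ s → x' u = x u) : μ x' = 0 := by
  have hall := (Finset.sum_eq_zero_iff_of_nonneg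
    (fun q (_ : q ∈ Finset.univ) => by split
                                       · exact hμ q
                                       · exact le_rfl)).mp hd x' (Finset.mem_univ x')
  rwa [if_pos hx'] at hall

lemma doob_proj [Nonempty X] (μ : (Fin T → X) → ℝ) (hμ : ∀ x, 0 ≤ μ x)
    (G ψ : (Fin T → X) → ℝ) (s : ℕ) (hψ : DepOn s ψ) :
    ∑ x, μ x * ψ x * doob μ G s x = ∑ x, μ x * ψ x * G x := by
  obtain ⟨x₀⟩ := (inferInstance : Nonempty X)
  set k : (Fin T → X) → (Fin T → X) :=
    fun x u => if (u : ℕ) ≤ s then x u else x₀ with hk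
  rw [← Finset.sum_fiberwise Finset.univ k (fun x => μ x * ψ x * doob μ G s x),
      ← Finset.sum_fiberwise Finset.univ k (fun x => μ x * ψ x * G x)]
  refine Finset.sum_congr rfl fun b _ => ?_
  by_cases hb : ∀ u : Fin T, ¬ (u : ℕ) ≤ s → b u = x₀
  · have hiff : ∀ x : Fin T → X, (k x = b) ↔ (∀ u : Fin T, (u : ℕ) ≤ s → x u = b u) := by
      intro x
      constructor
      · intro hkx u hu
        rw [← hkx]; simp [hk, hu]
      · intro hxs; funext u
        by_cases hu : (u : ℕ) ≤ s
        · simp [hk, hu, hxs u hu]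
        · simp [hk, hu, hb u hu]
    have hLHS : ∀ w : (Fin T → X) → ℝ,
        (∑ x ∈ Finset.univ.filter (fun x => k x = b), w x)
          = ∑ x', if ∀ u : Fin T, (u : ℕ) ≤ s → x' u = b u then w x' else 0 := by
      intro w
      rw [Finset.sum_filter]
      exact Finset.sum_congr rfl fun x _ => if_congr (hiff x) rfl rfl
    rw [hLHS, hLHS]
    by_cases hd : condDen μ s b = 0
    · refine (Finset.sum_eq_zero fun x _ => ?_).trans (Finset.sum_eq_zero fun x _ => ?_).symm
      · by_cases hx : ∀ u : Fin T, (u : ℕ) ≤ s → x u = b u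
        · rw [if_pos hx, mu_eq_zero_of_condDen μ hμ hd hx, zero_mul, zero_mul]
        · exact if_neg hx
      · by_cases hx : ∀ u : Fin T, (u : ℕ) ≤ s → x u = b u
        · rw [if_pos hx, mu_eq_zero_of_condDen μ hμ hd hx, zero_mul, zero_mul]
        · exact if_neg hx
    · have hstep : ∀ x : Fin T → X,
          (if ∀ u : Fin T, (u : ℕ) ≤ s → x u = b u then μ x * ψ x * doob μ G s x else 0)
            = (if ∀ u : Fin T, (u : ℕ) ≤ s → x u = b u then μ x else 0) * (ψ b * doob μ G s b) := by
        intro x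
        by_cases hx : ∀ u : Fin T, (u : ℕ) ≤ s → x u = b u
        · rw [if_pos hx, if_pos hx, hψ x b hx, doob_depOn μ G s x b hx]; ring
        · rw [if_neg hx, if_neg hx, zero_mul]
      calc (∑ x', if ∀ u : Fin T, (u : ℕ) ≤ s → x' u = b u then μ x' * ψ x' * doob μ G s x' else 0)
          = (∑ x', if ∀ u : Fin T, (u : ℕ) ≤ s → x' u = b u then μ x' else 0)
              * (ψ b * doob μ G s b) :=
            (Finset.sum_congr rfl fun x _ => hstep x).trans (Finset.sum_mul ..).symm
        _ = ψ b * condNum μ G s b := by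
            show condDen μ s b * (ψ b * doob μ G s b) = _
            rw [doob, if_neg hd]
            field_simp
        _ = ∑ x', if ∀ u : Fin T, (u : ℕ) ≤ s → x' u = b u then μ x' * ψ x' * G x' else 0 := by
            rw [condNum, Finset.mul_sum]
            refine Finset.sum_congr rfl fun x _ => ?_
            by_cases hx : ∀ u : Fin T, (u : ℕ) ≤ s → x u = b u
            · rw [if_pos hx, if_pos hx, hψ x b hx]; ring
            · rw [if_neg hx, if_neg hx, mul_zero]
  · push_neg at hb
    obtain ⟨u, hu, hbu⟩ := hb
    have hempty : ∀ w : (Fin T → X) → ℝ,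
        (∑ x ∈ Finset.univ.filter (fun x => k x = b), w x) = 0 := by
      intro w
      refine Finset.sum_eq_zero fun x hx => ?_
      have hkb := (Finset.mem_filter.mp hx).2
      exact absurd (by rw [← hkb]; simp [hk, not_le.mpr hu] : b u = x₀) hbu
    rw [hempty, hempty]

end DoobAux

section DoobAux2

variable {X : Type*} {T : ℕ} [Fintype X] [DecidableEq X]

lemma doob_martingale [Nonempty X] (μ : (Fin T → X) → ℝ) (hμ : ∀ x, 0 ≤ μ x)
    (G : (Fin T → X) → ℝ) : IsMuMartingale μ (fun s => doob μ G s) := by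
  refine ⟨fun s => doob_depOn μ G s, fun s hs φ hφ => ?_⟩
  have h1 := doob_proj μ hμ G φ (s + 1) (depOn_mono_s6 (Nat.le_succ s) hφ)
  have h2 := doob_proj μ hμ G φ s hφ
  have : ∑ x, μ x * φ x * (doob μ G (s + 1) x - doob μ G s x)
      = (∑ x, μ x * φ x * doob μ G (s + 1) x) - ∑ x, μ x * φ x * doob μ G s x := by
    rw [← Finset.sum_sub_distrib]
    exact Finset.sum_congr rfl fun x _ => by ring
  rw [this, h1, h2, sub_self]

lemma doob_top (hT : 0 < T) (μ : (Fin T → X) → ℝ) (G : (Fin T → X) → ℝ)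
    (x : Fin T → X) :
    doob μ G (T - 1) x = if μ x = 0 then 0 else G x := by
  have hcond : ∀ x' : Fin T → X,
      (∀ u : Fin T, (u : ℕ) ≤ T - 1 → x' u = x u) ↔ x' = x := by
    intro x'
    constructor
    · intro h; funext u; exact h u (by have := u.isLt; omega)
    · intro h; subst h; intro _ _; rfl
  have hden : condDen μ (T - 1) x = μ x := by
    refine (Finset.sum_congr rfl fun x' _ => if_congr (hcond x') rfl rfl).trans ?_
    rw [Finset.sum_ite_eq' Finset.univ x μ, if_pos (Finset.mem_univ x)]
  have hnum : condNum μ G (T - 1) x = μ x * G x := by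
    refine (Finset.sum_congr rfl fun x' _ => if_congr (hcond x') rfl rfl).trans ?_
    rw [Finset.sum_ite_eq' Finset.univ x (fun x' => μ x' * G x'), if_pos (Finset.mem_univ x)]
  unfold doob
  rw [hden, hnum]
  by_cases hμ0 : μ x = 0
  · rw [if_pos hμ0, if_pos hμ0]
  · rw [if_neg hμ0, if_neg hμ0, mul_div_cancel_left₀ _ hμ0]

end DoobAux2

lemma sum_Ico_telescope (F : ℕ → ℝ) {m n : ℕ} (h : m ≤ n) :
    ∑ s ∈ Finset.Ico m n, (F (s + 1) - F s) = F n - F m := by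
  induction n, h using Nat.le_induction with
  | base => simp
  | succ n hmn ih => rw [Finset.sum_Ico_succ_top hmn, ih]; ring

section LmuAux

variable {X Y : Type*} {T : ℕ} [Fintype X] [Fintype Y]

lemma inLmu_smul (μ : (Fin T → X) → ℝ) (c : ℝ)
    {l : ((Fin T → X) × (Fin T → Y)) → ℝ} (hl : InLmu μ l) :
    InLmu μ (fun p => c * l p) := by
  obtain ⟨J, h, M, hdep, hmart, rfl⟩ := hl
  refine ⟨J, fun j t y => c * h j t y, M,
    fun j t z z' hz => by dsimp only; rw [hdep j t z z' hz], hmart, ?_⟩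
  funext p
  simp only [Finset.mul_sum, mul_assoc]

lemma inLmu_zero (μ : (Fin T → X) → ℝ) : InLmu μ (fun _ : (Fin T → X) × (Fin T → Y) => (0 : ℝ)) := by
  have hz : IsMuMartingale μ (fun (_ : ℕ) (_ : Fin T → X) => (0 : ℝ)) :=
    ⟨fun _ z z' _ => rfl, fun _ _ φ _ => by simp⟩
  refine ⟨0, fun _ _ _ => 0, fun _ => (fun _ _ => 0), fun _ _ z z' _ => rfl,
    fun _ => hz, ?_⟩
  funext p
  simp

lemma expCost_smul (π : ((Fin T → X) × (Fin T → Y)) → ℝ) (c : ℝ)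
    (l : ((Fin T → X) × (Fin T → Y)) → ℝ) :
    expCost π (fun p => c * l p) = c * expCost π l := by
  unfold expCost
  rw [Finset.mul_sum]
  exact Finset.sum_congr rfl fun p _ => by ring

end LmuAux

lemma exists_test {X Y : Type*} {T : ℕ} [Fintype X] [Fintype Y] [DecidableEq X]
    (μ : (Fin T → X) → ℝ) (ν : (Fin T → Y) → ℝ)
    (hμpos : ∀ x, 0 ≤ μ x) (hμsum : ∑ x, μ x = 1)
    (π : ((Fin T → X) × (Fin T → Y)) → ℝ) (hπ : IsCouplingOf μ ν π)
    (hnc : ¬ CausalCoupling π) :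
    ∃ l, InLmu μ l ∧ expCost π l ≠ 0 := by
  unfold CausalCoupling at hnc
  push_neg at hnc
  obtain ⟨t, ht, f, hf, g, a, hne⟩ := hnc
  have hT : 0 < T := by omega
  haveI : Nonempty X := nonemptyX_of_sum_one hT μ hμsum
  have hπle : ∀ p : (Fin T → X) × (Fin T → Y), π p ≤ μ p.1 := by
    intro p
    rw [← hπ.2.1 p.1]
    have := Finset.single_le_sum (f := fun y => π (p.1, y))
      (fun y _ => hπ.1 _) (Finset.mem_univ p.2)
    simpa using this
  simp only [couplingMarg1 μ π hπ.2.1 (fun x => ∀ s : Fin T, (s : ℕ) ≤ t → x s = a s),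
    couplingMarg μ π hπ.2.1 (fun x => ∀ s : Fin T, (s : ℕ) ≤ t → x s = a s) g] at hne
  set C : ℝ := ∑ p : (Fin T → X) × (Fin T → Y),
    if ∀ s : Fin T, (s : ℕ) ≤ t → p.1 s = a s then π p * f p.2 * g p.1 else 0 with hC
  set A : ℝ := ∑ p : (Fin T → X) × (Fin T → Y),
    if ∀ s : Fin T, (s : ℕ) ≤ t → p.1 s = a s then π p * f p.2 else 0 with hA
  set m : ℝ := ∑ x, if ∀ s : Fin T, (s : ℕ) ≤ t → x s = a s then μ x else 0 with hm
  set B : ℝ := ∑ x, if ∀ s : Fin T, (s : ℕ) ≤ t → x s = a s then μ x * g x else 0 with hB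
  -- `hne : C * m ≠ A * B`
  have hmuz : m = 0 → ∀ x, (∀ s : Fin T, (s : ℕ) ≤ t → x s = a s) → μ x = 0 := by
    intro h0 x hx
    have hall := (Finset.sum_eq_zero_iff_of_nonneg
      (fun q (_ : q ∈ Finset.univ) => by split
                                         · exact hμpos q
                                         · exact le_rfl)).mp (hm ▸ h0) x (Finset.mem_univ x)
    rwa [if_pos hx] at hall
  have hm0 : m ≠ 0 := by
    intro h0
    have hB0 : B = 0 := by
      rw [hB]
      refine Finset.sum_eq_zero fun x _ => ?_
      by_cases hx : ∀ s : Fin T, (s : ℕ) ≤ t → x s = a s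
      · rw [if_pos hx, hmuz h0 x hx, zero_mul]
      · exact if_neg hx
    exact hne (by rw [h0, hB0, mul_zero, mul_zero])
  set G : (Fin T → X) → ℝ :=
    fun x => (if ∀ s : Fin T, (s : ℕ) ≤ t → x s = a s then (1 : ℝ) else 0) * g x with hG
  refine ⟨fun p => ∑ j : Fin 1, ∑ s ∈ Finset.range (T - 1),
      (if t ≤ s then f p.2 else 0) * (doob μ G (s + 1) p.1 - doob μ G s p.1),
    ⟨1, fun _ s y => if t ≤ s then f y else 0, fun _ s => doob μ G s, ?_, ?_, rfl⟩, ?_⟩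
  · intro j s
    by_cases hts : t ≤ s
    · intro z z' hz; simp only [if_pos hts]; exact depOn_mono_s6 hts hf z z' hz
    · intro z z' hz; simp only [if_neg hts]
  · intro j
    exact doob_martingale μ hμpos G
  · -- the expected cost is nonzero
    have hlp : ∀ p : (Fin T → X) × (Fin T → Y),
        (∑ j : Fin 1, ∑ s ∈ Finset.range (T - 1),
          (if t ≤ s then f p.2 else 0) * (doob μ G (s + 1) p.1 - doob μ G s p.1))
        = f p.2 * (doob μ G (T - 1) p.1 - doob μ G t p.1) := by
      intro p
      rw [Fin.sum_univ_one]
      have h1 : ∀ s : ℕ, (if t ≤ s then f p.2 else 0) *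
          (doob μ G (s + 1) p.1 - doob μ G s p.1)
          = if t ≤ s then f p.2 * (doob μ G (s + 1) p.1 - doob μ G s p.1) else 0 := by
        intro s
        by_cases hts : t ≤ s
        · rw [if_pos hts, if_pos hts]
        · rw [if_neg hts, if_neg hts, zero_mul]
      simp only [h1]
      rw [← Finset.sum_filter]
      have hset : Finset.filter (fun s => t ≤ s) (Finset.range (T - 1))
          = Finset.Ico t (T - 1) := by
        ext s
        simp only [Finset.mem_filter, Finset.mem_range, Finset.mem_Ico]
        omega
      rw [hset, ← Finset.mul_sum,
        sum_Ico_telescope (fun s => doob μ G s p.1) (by omega : t ≤ T - 1)]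
    have htop : (∑ p : (Fin T → X) × (Fin T → Y),
        π p * f p.2 * doob μ G (T - 1) p.1) = C := by
      rw [hC]
      refine Finset.sum_congr rfl fun p _ => ?_
      rw [doob_top hT μ G p.1]
      by_cases hμ0 : μ p.1 = 0
      · rw [if_pos hμ0, mul_zero]
        have hp0 : π p = 0 := le_antisymm ((hπle p).trans_eq hμ0) (hπ.1 p)
        by_cases hcp : ∀ s : Fin T, (s : ℕ) ≤ t → p.1 s = a s
        · rw [if_pos hcp, hp0, zero_mul, zero_mul]
        · rw [if_neg hcp]
      · rw [if_neg hμ0]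
        simp only [hG]
        by_cases hcp : ∀ s : Fin T, (s : ℕ) ≤ t → p.1 s = a s
        · rw [if_pos hcp, if_pos hcp, one_mul]
        · rw [if_neg hcp, if_neg hcp, zero_mul, mul_zero]
    have hval : ∀ x : Fin T → X, doob μ G t x
        = (if ∀ s : Fin T, (s : ℕ) ≤ t → x s = a s then (1 : ℝ) else 0) * (B / m) := by
      intro x
      by_cases hcx : ∀ s : Fin T, (s : ℕ) ≤ t → x s = a s
      · have hiff : ∀ x' : Fin T → X,
            (∀ u : Fin T, (u : ℕ) ≤ t → x' u = x u) ↔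
            (∀ s : Fin T, (s : ℕ) ≤ t → x' s = a s) := by
          intro x'
          constructor
          · intro hx' s hs; rw [hx' s hs]; exact hcx s hs
          · intro hx' s hs; rw [hx' s hs]; exact (hcx s hs).symm
        have hdenx : condDen μ t x = m := by
          rw [hm]
          exact Finset.sum_congr rfl fun x' _ => if_congr (hiff x') rfl rfl
        have hnumx : condNum μ G t x = B := by
          rw [hB]
          refine Finset.sum_congr rfl fun x' _ => ?_
          by_cases hcx' : ∀ s : Fin T, (s : ℕ) ≤ t → x' s = a s
          · rw [if_pos ((hiff x').mpr hcx'), if_pos hcx']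
            simp only [hG]
            show μ x' * ((if ∀ s : Fin T, (s : ℕ) ≤ t → x' s = a s then (1:ℝ) else 0) * g x')
              = μ x' * g x'
            rw [if_pos hcx', one_mul]
          · rw [if_neg (fun hh => hcx' ((hiff x').mp hh)), if_neg hcx']
        unfold doob
        rw [hdenx, hnumx, if_neg hm0, if_pos hcx, one_mul]
      · have hnumx : condNum μ G t x = 0 := by
          refine Finset.sum_eq_zero fun x' _ => ?_
          by_cases hagree : ∀ u : Fin T, (u : ℕ) ≤ t → x' u = x u
          · rw [if_pos hagree]
            simp only [hG]
            have hnc' : ¬ ∀ s : Fin T, (s : ℕ) ≤ t → x' s = a s := by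
              intro hc'
              exact hcx fun s hs => by rw [← hagree s hs]; exact hc' s hs
            show μ x' * ((if ∀ s : Fin T, (s : ℕ) ≤ t → x' s = a s then (1:ℝ) else 0) * g x') = 0
            rw [if_neg hnc', zero_mul, mul_zero]
          · exact if_neg hagree
        rw [if_neg hcx, zero_mul]
        unfold doob
        rw [hnumx]
        by_cases hd : condDen μ t x = 0
        · rw [if_pos hd]
        · rw [if_neg hd, zero_div]
    have hmid : (∑ p : (Fin T → X) × (Fin T → Y),
        π p * f p.2 * doob μ G t p.1) = B / m * A := by
      calc (∑ p : (Fin T → X) × (Fin T → Y), π p * f p.2 * doob μ G t p.1)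
          = ∑ p : (Fin T → X) × (Fin T → Y),
            (if ∀ s : Fin T, (s : ℕ) ≤ t → p.1 s = a s then π p * f p.2 else 0) * (B / m) := by
            refine Finset.sum_congr rfl fun p _ => ?_
            rw [hval p.1]
            by_cases hcp : ∀ s : Fin T, (s : ℕ) ≤ t → p.1 s = a s
            · rw [if_pos hcp, if_pos hcp, one_mul]
            · simp [hcp]
        _ = B / m * A := by
            rw [← Finset.sum_mul, ← hA, mul_comm]
    have hexp : expCost π (fun p : (Fin T → X) × (Fin T → Y) =>
        ∑ j : Fin 1, ∑ s ∈ Finset.range (T - 1),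
          (if t ≤ s then f p.2 else 0) * (doob μ G (s + 1) p.1 - doob μ G s p.1))
        = C - B / m * A := by
      unfold expCost
      calc (∑ p : (Fin T → X) × (Fin T → Y), π p * ∑ j : Fin 1, ∑ s ∈ Finset.range (T - 1),
              (if t ≤ s then f p.2 else 0) * (doob μ G (s + 1) p.1 - doob μ G s p.1))
          = ∑ p : (Fin T → X) × (Fin T → Y),
              (π p * f p.2 * doob μ G (T - 1) p.1 - π p * f p.2 * doob μ G t p.1) := by
            refine Finset.sum_congr rfl fun p _ => ?_
            rw [hlp p]
            ring
        _ = C - B / m * A := by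
            rw [Finset.sum_sub_distrib, htop, hmid]
    rw [hexp]
    intro h0
    rw [sub_eq_zero] at h0
    refine hne ?_
    rw [h0]
    field_simp


open Classical in
/-- For a causal coupling `π` and any `l ∈ L(μ)`, `E^π[l] = 0`; conversely, if
`π` is not causal there is `l ∈ L(μ)` with `E^π[l] > 0`; hence
`sup_{l ∈ L(μ)} E^π[l]` equals `0` if `π` is causal and `+∞` otherwise
(since `L(μ)` is a cone). -/
theorem causal_test_characteristic_function
    {X Y : Type*} {T : ℕ} [Fintype X] [Fintype Y] [DecidableEq X]
    (μ : (Fin T → X) → ℝ) (ν : (Fin T → Y) → ℝ)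
    (hμpos : ∀ x, 0 ≤ μ x) (hμsum : ∑ x, μ x = 1)
    (hνpos : ∀ y, 0 ≤ ν y) (hνsum : ∑ y, ν y = 1)
    (π : ((Fin T → X) × (Fin T → Y)) → ℝ) (hπ : IsCouplingOf μ ν π) :
    (CausalCoupling π → ∀ l, InLmu μ l → expCost π l = 0) ∧
    (¬ CausalCoupling π → ∃ l, InLmu μ l ∧ 0 < expCost π l) ∧
    ((⨆ l : {l // InLmu μ l}, ((expCost π l.1 : ℝ) : EReal))
      = if CausalCoupling π then (0 : EReal) else ⊤) := by
  have part1 : CausalCoupling π → ∀ l, InLmu μ l → expCost π l = 0 := by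
    intro hc l hl
    obtain ⟨J, h, M, hdep, hmart, rfl⟩ := hl
    unfold expCost
    have hsplit : ∀ p : (Fin T → X) × (Fin T → Y),
        π p * (∑ j, ∑ t ∈ Finset.range (T - 1), h j t p.2 * (M j (t + 1) p.1 - M j t p.1))
          = ∑ j, ∑ t ∈ Finset.range (T - 1),
              π p * (h j t p.2 * (M j (t + 1) p.1 - M j t p.1)) := by
      intro p
      rw [Finset.mul_sum]
      exact Finset.sum_congr rfl fun j _ => Finset.mul_sum _ _ _
    simp only [hsplit]
    rw [Finset.sum_comm]
    refine Finset.sum_eq_zero fun j _ => ?_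
    rw [Finset.sum_comm]
    refine Finset.sum_eq_zero fun s hs => ?_
    have hsT : s + 1 < T := by
      have := Finset.mem_range.mp hs; omega
    exact causal_term_zero μ ν π hπ hc hμsum s hsT (h j s) (hdep j s) (M j) (hmart j)
  have part2 : ¬ CausalCoupling π → ∃ l, InLmu μ l ∧ 0 < expCost π l := by
    intro hnc
    obtain ⟨l, hl, hne0⟩ := exists_test μ ν hμpos hμsum π hπ hnc
    rcases hne0.lt_or_gt with hlt | hgt
    · exact ⟨fun p => (-1) * l p, inLmu_smul μ (-1) hl,
        by rw [expCost_smul]; linarith⟩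
    · exact ⟨l, hl, hgt⟩
  refine ⟨part1, part2, ?_⟩
  by_cases hc : CausalCoupling π
  · rw [if_pos hc]
    haveI : Nonempty {l // InLmu μ l} := ⟨⟨_, inLmu_zero (Y := Y) μ⟩⟩
    have hall : ∀ l : {l // InLmu μ l}, ((expCost π l.1 : ℝ) : EReal) = (0 : EReal) := by
      intro l
      rw [part1 hc l.1 l.2]
      exact EReal.coe_zero
    exact (iSup_congr hall).trans iSup_const
  · rw [if_neg hc]
    obtain ⟨l, hl, hpos⟩ := part2 hc
    rw [iSup_eq_top]
    intro b hb
    obtain ⟨r, hbr, _⟩ := EReal.lt_iff_exists_real_btwn.mp hb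
    obtain ⟨n, hn⟩ := exists_nat_gt (r / expCost π l)
    refine ⟨⟨fun p => (n : ℝ) * l p, inLmu_smul μ _ hl⟩, ?_⟩
    have hval : expCost π (fun p => (n : ℝ) * l p) = (n : ℝ) * expCost π l :=
      expCost_smul π _ l
    calc b < (r : EReal) := hbr
      _ < (((n : ℝ) * expCost π l : ℝ) : EReal) := by
          rw [EReal.coe_lt_coe_iff]
          have := (div_lt_iff₀ hpos).mp hn
          linarith
      _ = _ := by rw [hval]
end

section
/- The function l(x,y) = ∑_{t=1}^{T-1} h_t(y_{≤t}) ΔM_{t+1}(x_{≤t+1}) has E^π[l] = 0 for every causal coupling π whenever h_t are bounded measurable adapted functions and M is a μ-martingale; in particular E^{μ⊗ν}[l] = 0 for the independent coupling. -/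
open scoped BigOperators

section Aux

variable {X Y : Type*} {T : ℕ} [Fintype X] [Fintype Y] [DecidableEq X]

private lemma aux_causal_zero
    (μ : (Fin T → X) → ℝ)
    (h : ℕ → (Fin T → Y) → ℝ) (hadap : ∀ t : ℕ, DepOn t (h t))
    (M : ℕ → (Fin T → X) → ℝ) (hM : IsMuMartingale μ M)
    (π : ((Fin T → X) × (Fin T → Y)) → ℝ)
    (hπpos : ∀ p, 0 ≤ π p) (hπm : ∀ a, ∑ b, π (a, b) = μ a)
    (hcausal : CausalCoupling π) :
    (∑ p : (Fin T → X) × (Fin T → Y),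
        π p * ∑ t ∈ Finset.range (T - 1), h t p.2 * (M (t + 1) p.1 - M t p.1)) = 0 := by
  classical
  rcases isEmpty_or_nonempty (Fin T → X) with hE | hNE
  · simp
  simp_rw [Finset.mul_sum]
  rw [Finset.sum_comm]
  refine Finset.sum_eq_zero ?_
  intro t ht
  rw [Finset.mem_range] at ht
  have hT : t + 1 < T := by omega
  set g : (Fin T → X) → ℝ := fun x => M (t + 1) x - M t x with hg
  -- canonical representative map
  obtain ⟨x0⟩ := hNE
  set r : (Fin T → X) → (Fin T → X) :=
    fun b => fun s => if (s : ℕ) ≤ t then b s else x0 s with hrdef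
  have hrr : ∀ b, r (r b) = r b := by
    intro b; funext s; by_cases hs : (s : ℕ) ≤ t <;> simp [hrdef, hs]
  have expand : ∀ p : (Fin T → X) × (Fin T → Y),
      π p * (h t p.2 * g p.1)
        = ∑ a : Fin T → X, if r p.1 = a then π p * (h t p.2 * g p.1) else 0 := by
    intro p
    rw [Finset.sum_ite_eq]
    simp
  calc (∑ p : (Fin T → X) × (Fin T → Y), π p * (h t p.2 * g p.1))
      = ∑ p : (Fin T → X) × (Fin T → Y), ∑ a : Fin T → X,
          if r p.1 = a then π p * (h t p.2 * g p.1) else 0 :=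
        Finset.sum_congr rfl (fun p _ => expand p)
    _ = ∑ a : Fin T → X, ∑ p : (Fin T → X) × (Fin T → Y),
          if r p.1 = a then π p * (h t p.2 * g p.1) else 0 := Finset.sum_comm
    _ = 0 := ?_
  refine Finset.sum_eq_zero ?_
  intro a _
  by_cases hra : r a = a
  · -- the condition `r p.1 = a` is the cylinder condition
    have hcond : ∀ x : Fin T → X,
        (r x = a) ↔ (∀ s : Fin T, (s : ℕ) ≤ t → x s = a s) := by
      intro x
      constructor
      · intro hx s hs
        rw [← hx]; simp [hrdef, hs]
      · intro hx
        funext s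
        by_cases hs : (s : ℕ) ≤ t
        · simp [hrdef, hs, hx s hs]
        · have := congrFun hra s
          simp only [hrdef, hs, if_neg] at this ⊢
          exact this
    have hrw : (∑ p : (Fin T → X) × (Fin T → Y),
          if r p.1 = a then π p * (h t p.2 * g p.1) else 0)
        = ∑ p : (Fin T → X) × (Fin T → Y),
          if ∀ s : Fin T, (s : ℕ) ≤ t → p.1 s = a s then π p * h t p.2 * g p.1 else 0 := by
      refine Finset.sum_congr rfl (fun p _ => ?_)
      rw [mul_assoc]
      exact if_congr (hcond p.1) rfl rfl
    rw [hrw]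
    -- the conditional expectation of g vanishes
    have hSg : (∑ p : (Fin T → X) × (Fin T → Y),
        if ∀ s : Fin T, (s : ℕ) ≤ t → p.1 s = a s then π p * g p.1 else 0) = 0 := by
      have hφ : DepOn t (fun x : Fin T → X =>
          if ∀ s : Fin T, (s : ℕ) ≤ t → x s = a s then (1 : ℝ) else 0) := by
        intro z z' hz
        have : (∀ s : Fin T, (s : ℕ) ≤ t → z s = a s)
            ↔ (∀ s : Fin T, (s : ℕ) ≤ t → z' s = a s) := by
          constructor
          · intro H s hs; rw [← hz s hs]; exact H s hs
          · intro H s hs; rw [hz s hs]; exact H s hs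
        show (if ∀ s : Fin T, (s : ℕ) ≤ t → z s = a s then (1 : ℝ) else 0)
            = (if ∀ s : Fin T, (s : ℕ) ≤ t → z' s = a s then (1 : ℝ) else 0)
        simp only [this]
      have hmart := hM.2 t hT _ hφ
      calc (∑ p : (Fin T → X) × (Fin T → Y),
            if ∀ s : Fin T, (s : ℕ) ≤ t → p.1 s = a s then π p * g p.1 else 0)
          = ∑ x : Fin T → X, ∑ y : Fin T → Y,
              if ∀ s : Fin T, (s : ℕ) ≤ t → x s = a s then π (x, y) * g x else 0 := by
            rw [Fintype.sum_prod_type]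
        _ = ∑ x : Fin T → X,
              if ∀ s : Fin T, (s : ℕ) ≤ t → x s = a s then μ x * g x else 0 := by
            refine Finset.sum_congr rfl (fun x _ => ?_)
            by_cases hc : ∀ s : Fin T, (s : ℕ) ≤ t → x s = a s
            · rw [if_pos hc, ← hπm x, Finset.sum_mul]
              exact Finset.sum_congr rfl fun y _ => if_pos hc
            · simp [hc]
        _ = ∑ x : Fin T → X, μ x *
              (if ∀ s : Fin T, (s : ℕ) ≤ t → x s = a s then (1 : ℝ) else 0) *
              (M (t + 1) x - M t x) := by
            refine Finset.sum_congr rfl (fun x _ => ?_)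
            by_cases hc : ∀ s : Fin T, (s : ℕ) ≤ t → x s = a s <;> simp [hc, hg]
        _ = 0 := hmart
    have hcaus := hcausal t hT (h t) (hadap t) g a
    rw [hSg, mul_zero] at hcaus
    by_cases hS1 : (∑ p : (Fin T → X) × (Fin T → Y),
        if ∀ s : Fin T, (s : ℕ) ≤ t → p.1 s = a s then π p else 0) = 0
    · have hall : ∀ p ∈ (Finset.univ : Finset ((Fin T → X) × (Fin T → Y))),
          (if ∀ s : Fin T, (s : ℕ) ≤ t → p.1 s = a s then π p else 0) = 0 := by
        refine (Finset.sum_eq_zero_iff_of_nonneg ?_).1 hS1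
        intro p _
        split
        · exact hπpos p
        · exact le_refl 0
      refine Finset.sum_eq_zero ?_
      intro p _
      by_cases hc : ∀ s : Fin T, (s : ℕ) ≤ t → p.1 s = a s
      · have := hall p (Finset.mem_univ p)
        rw [if_pos hc] at this
        rw [if_pos hc, this]; ring
      · rw [if_neg hc]
    · rcases mul_eq_zero.1 hcaus with h0 | h0
      · exact h0
      · exact absurd h0 hS1
  · refine Finset.sum_eq_zero ?_
    intro p _
    rw [if_neg]
    intro hc
    exact hra (by rw [← hc, hrr])

end Aux

/-- For `l(x,y) = ∑_{t=1}^{T-1} h_t(y_{≤t}) ΔM_{t+1}(x_{≤t+1})` with `h_t`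
bounded adapted and `M` a `μ`-martingale, `E^π[l] = 0` for every causal
coupling `π`; in particular `E^{μ⊗ν}[l] = 0` for the independent coupling. -/

theorem causal_test_function_zero_expectation
    {X Y : Type*} {T : ℕ} [Fintype X] [Fintype Y] [DecidableEq X]
    (μ : (Fin T → X) → ℝ) (ν : (Fin T → Y) → ℝ)
    (hμpos : ∀ x, 0 ≤ μ x) (hμsum : ∑ x, μ x = 1)
    (hνpos : ∀ y, 0 ≤ ν y) (hνsum : ∑ y, ν y = 1)
    (h : ℕ → (Fin T → Y) → ℝ) (hadap : ∀ t : ℕ, DepOn t (h t))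
    (M : ℕ → (Fin T → X) → ℝ) (hM : IsMuMartingale μ M)
    (π : ((Fin T → X) × (Fin T → Y)) → ℝ)
    (hπ : IsCouplingOf μ ν π) (hcausal : CausalCoupling π) :
    (∑ p : (Fin T → X) × (Fin T → Y),
        π p * ∑ t ∈ Finset.range (T - 1), h t p.2 * (M (t + 1) p.1 - M t p.1)) = 0 ∧
    (∑ p : (Fin T → X) × (Fin T → Y),
        (μ p.1 * ν p.2) * ∑ t ∈ Finset.range (T - 1),
          h t p.2 * (M (t + 1) p.1 - M t p.1)) = 0 := by
  constructor
  · exact aux_causal_zero μ h hadap M hM π hπ.1 hπ.2.1 hcausal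
  · simp_rw [Finset.mul_sum]
    rw [Finset.sum_comm]
    refine Finset.sum_eq_zero ?_
    intro t ht
    rw [Finset.mem_range] at ht
    have hT : t + 1 < T := by omega
    have hmart := hM.2 t hT (fun _ => (1 : ℝ)) (fun _ _ _ => rfl)
    simp only [mul_one] at hmart
    calc (∑ p : (Fin T → X) × (Fin T → Y),
          μ p.1 * ν p.2 * (h t p.2 * (M (t + 1) p.1 - M t p.1)))
        = (∑ x : Fin T → X, μ x * (M (t + 1) x - M t x)) * (∑ y : Fin T → Y, ν y * h t y) := by
          rw [Fintype.sum_prod_type, Finset.sum_mul]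
          refine Finset.sum_congr rfl (fun x _ => ?_)
          rw [Finset.mul_sum]
          refine Finset.sum_congr rfl (fun y _ => ?_)
          ring
      _ = 0 := by rw [hmart, zero_mul]
end

section
/- For a concave function H and linear functional π ↦ E^π[c] on a compact convex set Π, with a convex cone L of linear functionals satisfying sup_{l∈L} E^π[l] ∈ {0, +∞} with value 0 exactly on a convex compact subset Π₀ ⊆ Π, one has inf_{π∈Π₀} {E^π[c] - εH(π)} = sup_{l∈L} inf_{π∈Π} {E^π[c + l] - εH(π)}. -/
open scoped BigOperators

/-- Key finite minimax lemma: finitely many convex continuous functions on a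
compact set; if every convex combination dips strictly below `b` somewhere,
then some point pushes all of them simultaneously to `≤ b`. -/
lemma sion_finite_aux {ι κ : Type*} [Fintype ι] [Fintype κ] [Nonempty κ]
    (S : Set (ι → ℝ)) (hScomp : IsCompact S) (hSne : S.Nonempty)
    (G : κ → (ι → ℝ) → ℝ)
    (hGconv : ∀ i, ConvexOn ℝ S (G i))
    (hGcont : ∀ i, ContinuousOn (G i) S)
    (b : ℝ)
    (hmix : ∀ lam : κ → ℝ, (∀ i, 0 ≤ lam i) → ∑ i, lam i = 1 →
      ∃ π ∈ S, ∑ i, lam i * G i π < b) :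
    ∃ π ∈ S, ∀ i, G i π ≤ b := by
  classical
  have hne : (Finset.univ : Finset κ).Nonempty := Finset.univ_nonempty
  set h : (ι → ℝ) → ℝ := fun π => (Finset.univ : Finset κ).sup' hne (fun i => G i π) with hh
  have hhcont : ContinuousOn h S :=
    ContinuousOn.finset_sup'_apply hne (fun i _ => hGcont i)
  obtain ⟨π₀, hπ₀S, hmin⟩ := hScomp.exists_isMinOn hSne hhcont
  by_cases hb : h π₀ ≤ b
  · exact ⟨π₀, hπ₀S, fun i => le_trans (Finset.le_sup' (fun i => G i π₀) (Finset.mem_univ i)) hb⟩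
  push_neg at hb
  exfalso
  set β := h π₀ with hβ
  -- convex set C of values dominating some point of S
  set C : Set (κ → ℝ) := {y | ∃ π ∈ S, ∀ i, G i π ≤ y i} with hC
  have hCconv : Convex ℝ C := by
    rintro y ⟨π, hπ, hy⟩ z ⟨π', hπ', hz⟩ a a' ha ha' haa
    refine ⟨a • π + a' • π', (hGconv (Classical.arbitrary κ)).1 hπ hπ' ha ha' haa, fun i => ?_⟩
    calc G i (a • π + a' • π') ≤ a * G i π + a' * G i π' := (hGconv i).2 hπ hπ' ha ha' haa
    _ ≤ a * y i + a' * z i := by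
        have := hy i; have := hz i; nlinarith [hy i, hz i]
    _ = (a • y + a' • z) i := by simp [Pi.add_apply, smul_eq_mul]
  -- open convex set B
  set B : Set (κ → ℝ) := {y | ∀ i, y i < β} with hBdef
  have hBpi : B = Set.pi Set.univ (fun _ => Set.Iio β) := by
    ext y; simp [hBdef, Set.mem_pi]
  have hBconv : Convex ℝ B := by
    rw [hBpi]; exact convex_pi (fun i _ => convex_Iio β)
  have hBopen : IsOpen B := by
    rw [hBpi]; exact isOpen_set_pi Set.finite_univ (fun i _ => isOpen_Iio)
  have hdisj : Disjoint B C := by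
    rw [Set.disjoint_left]
    rintro y hyB ⟨π, hπ, hy⟩
    have : h π < β := by
      rw [hh]
      exact Finset.sup'_lt_iff hne |>.mpr (fun i _ => lt_of_le_of_lt (hy i) (hyB i))
    exact absurd (hmin hπ) (not_le.mpr this)
  obtain ⟨φ, u, hBu, hCu⟩ := geometric_hahn_banach_open hBconv hBopen hCconv hdisj
  -- coordinates of φ
  set lam : κ → ℝ := fun i => φ ((Pi.single i 1 : κ → ℝ)) with hlam
  have hrepr : ∀ y : κ → ℝ, φ y = ∑ i, y i * lam i := by
    intro y
    have hy : y = ∑ i, y i • (Pi.single i 1 : κ → ℝ) := by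
      funext j
      simp [Finset.sum_apply, Pi.single_apply]
    conv_lhs => rw [hy]
    rw [map_sum]
    simp [hlam, smul_eq_mul]
  -- base points
  have hy0B : (fun _ : κ => b) ∈ B := fun i => hb
  have hy0 : φ (fun _ : κ => b) < u := hBu _ hy0B
  have hz0C : (fun i => G i π₀) ∈ C := ⟨π₀, hπ₀S, fun i => le_rfl⟩
  -- nonnegativity of lam
  have hlamnn : ∀ i, 0 ≤ lam i := by
    intro i
    by_contra hneg
    push_neg at hneg
    set t : ℝ := (φ (fun _ : κ => b) - u) / lam i with ht
    have htpos : 0 < t := div_pos_of_neg_of_neg (by linarith) hneg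
    have hyB : ((fun _ : κ => b) - t • (Pi.single i 1 : κ → ℝ)) ∈ B := by
      intro j
      by_cases hji : j = i
      · subst hji
        simp only [Pi.sub_apply, Pi.smul_apply, Pi.single_eq_same, smul_eq_mul, mul_one]
        linarith
      · simp only [Pi.sub_apply, Pi.smul_apply, Pi.single_apply, if_neg (Ne.symm hji)]
        simpa [hji] using hb
    have : φ ((fun _ : κ => b) - t • (Pi.single i 1 : κ → ℝ)) = u := by
      rw [map_sub, map_smul]
      have hli : φ (Pi.single i 1 : κ → ℝ) = lam i := rfl
      simp only [smul_eq_mul, hli, ht]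
      field_simp [hneg.ne]
      ring
    exact absurd (hBu _ hyB) (by rw [this]; exact lt_irrefl u)
  -- total mass positive
  set Λ : ℝ := ∑ i, lam i with hΛ
  have hΛnn : 0 ≤ Λ := Finset.sum_nonneg (fun i _ => hlamnn i)
  have hΛpos : 0 < Λ := by
    rcases eq_or_lt_of_le hΛnn with hz | hp
    · exfalso
      have hall : ∀ i, lam i = 0 := by
        intro i
        have := Finset.sum_eq_zero_iff_of_nonneg (fun i _ => hlamnn i) |>.mp hz.symm
        exact this i (Finset.mem_univ i)
      have h1 : φ (fun _ : κ => b) = 0 := by rw [hrepr]; simp [hall]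
      have h2 : φ (fun i => G i π₀) = 0 := by rw [hrepr]; simp [hall]
      have := hCu _ hz0C
      rw [h2] at this
      rw [h1] at hy0
      linarith
    · exact hp
  -- normalized weights
  obtain ⟨π, hπS, hπlt⟩ := hmix (fun i => lam i / Λ)
    (fun i => div_nonneg (hlamnn i) hΛnn)
    (by rw [← Finset.sum_div]; field_simp; exact hΛ.symm)
  have hzC : (fun i => G i π) ∈ C := ⟨π, hπS, fun i => le_rfl⟩
  have h1 : u ≤ ∑ i, G i π * lam i := by
    have := hCu _ hzC; rwa [hrepr] at this
  have h2 : ∑ i, G i π * lam i < Λ * b := by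
    have : ∑ i, G i π * lam i = Λ * ∑ i, (lam i / Λ) * G i π := by
      rw [Finset.mul_sum]
      congr 1; funext i
      field_simp
    rw [this]
    have := mul_lt_mul_of_pos_left hπlt hΛpos
    linarith
  have h3 : φ (fun _ : κ => b) = Λ * b := by
    rw [hrepr, hΛ, Finset.sum_mul]
    congr 1; funext i; ring
  rw [h3] at hy0
  linarith

/-- Abstract minimax principle underlying the reformulation of regularized
causal optimal transport: for a concave continuous `H` and the linear
functional `π ↦ E^π[c] = ∑ i, π i * c i` on a compact convex set `S` (inside a
finite-dimensional simplex), with a convex cone `L` of linear functionals such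
that `sup_{l ∈ L} E^π[l]` is `0` exactly on a convex compact subset `S₀ ⊆ S`
and `+∞` elsewhere on `S`, one has
`inf_{π ∈ S₀} {E^π[c] - εH(π)} = sup_{l ∈ L} inf_{π ∈ S} {E^π[c+l] - εH(π)}`. -/
theorem abstract_minimax_causal_reformulation
    {ι : Type*} [Fintype ι]
    (S S₀ : Set (ι → ℝ))
    (hScomp : IsCompact S) (hSconv : Convex ℝ S) (hSne : S.Nonempty)
    (hSsimplex : ∀ π ∈ S, (∀ i, 0 ≤ π i) ∧ ∑ i, π i = 1)
    (hsub : S₀ ⊆ S) (hS₀comp : IsCompact S₀) (hS₀conv : Convex ℝ S₀)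
    (hS₀ne : S₀.Nonempty)
    (H : (ι → ℝ) → ℝ) (hHcont : ContinuousOn H S) (hHconc : ConcaveOn ℝ S H)
    (c : ι → ℝ) (ε : ℝ) (hε : 0 ≤ ε)
    (L : Set (ι → ℝ)) (hLconv : Convex ℝ L)
    (hLcone : ∀ l ∈ L, ∀ a : ℝ, 0 ≤ a → a • l ∈ L)
    (hchar0 : ∀ π ∈ S₀,
      (⨆ l : L, ((∑ i, π i * (l : ι → ℝ) i : ℝ) : EReal)) = 0)
    (hchar1 : ∀ π ∈ S, π ∉ S₀ →
      (⨆ l : L, ((∑ i, π i * (l : ι → ℝ) i : ℝ) : EReal)) = ⊤) :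
    sInf ((fun π => (∑ i, π i * c i) - ε * H π) '' S₀)
      = sSup {r : ℝ | ∃ l ∈ L,
          r = sInf ((fun π => (∑ i, π i * (c i + l i)) - ε * H π) '' S)} := by
  classical
  set f : (ι → ℝ) → ℝ := fun π => (∑ i, π i * c i) - ε * H π with hf
  -- continuity of the linear pairing
  have hlincont : ∀ d : ι → ℝ, Continuous (fun π : ι → ℝ => ∑ i, π i * d i) :=
    fun d => continuous_finset_sum _ (fun i _ => (continuous_apply i).mul continuous_const)
  have hfcont : ContinuousOn f S :=
    ((hlincont c).continuousOn).sub (continuousOn_const.mul hHcont)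
  have hfS₀cont : ContinuousOn f S₀ := hfcont.mono hsub
  -- a linear expansion identity
  have hlin : ∀ (d : ι → ℝ) (x y : ι → ℝ) (a b : ℝ),
      ∑ i, (a • x + b • y) i * d i = a * (∑ i, x i * d i) + b * (∑ i, y i * d i) := by
    intro d x y a b
    simp [add_mul, mul_assoc, Finset.sum_add_distrib, Finset.mul_sum]
  -- convexity of the pairing and of f
  have hlinconv : ∀ d : ι → ℝ, ConvexOn ℝ S (fun π => ∑ i, π i * d i) := by
    intro d
    exact ⟨hSconv, fun x hx y hy a b ha hb hab => le_of_eq (hlin d x y a b)⟩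
  have hfconv : ConvexOn ℝ S f := by
    refine ⟨hSconv, fun x hx y hy a b ha hb hab => ?_⟩
    have hH := hHconc.2 hx hy ha hb hab
    simp only [smul_eq_mul] at hH
    have hεH := mul_le_mul_of_nonneg_left hH hε
    simp only [hf, smul_eq_mul]
    rw [hlin c x y a b]
    nlinarith [hεH]
  -- nonemptiness of L and 0 ∈ L
  have hLne : L.Nonempty := by
    obtain ⟨π₀, hπ₀⟩ := hS₀ne
    by_contra hL
    rw [Set.not_nonempty_iff_eq_empty] at hL
    haveI : IsEmpty ↥L := Set.isEmpty_coe_sort.mpr hL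
    have := hchar0 π₀ hπ₀
    rw [iSup_of_empty] at this
    simp at this
  have h0L : (0 : ι → ℝ) ∈ L := by
    obtain ⟨l, hl⟩ := hLne
    simpa using hLcone l hl 0 le_rfl
  -- pairing is nonpositive on S₀
  have hpair : ∀ π ∈ S₀, ∀ l ∈ L, ∑ i, π i * l i ≤ 0 := by
    intro π hπ l hl
    have h1 : ((∑ i, π i * l i : ℝ) : EReal)
        ≤ ⨆ l : L, ((∑ i, π i * (l : ι → ℝ) i : ℝ) : EReal) :=
      le_iSup (fun l : L => ((∑ i, π i * (l : ι → ℝ) i : ℝ) : EReal)) ⟨l, hl⟩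
    rw [hchar0 π hπ] at h1
    exact_mod_cast h1
  -- minimum over S₀
  have himg₀ : IsCompact (f '' S₀) := hS₀comp.image_of_continuousOn hfS₀cont
  set m : ℝ := sInf (f '' S₀) with hm
  have hm_mem : m ∈ f '' S₀ := himg₀.sInf_mem (hS₀ne.image f)
  have hm_le : ∀ π ∈ S₀, m ≤ f π := fun π hπ => csInf_le himg₀.bddBelow ⟨π, hπ, rfl⟩
  obtain ⟨πm, hπm, hπmf⟩ := hm_mem
  -- rewriting the shifted objective
  have hFeq : ∀ (l : ι → ℝ) (π : ι → ℝ),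
      (∑ i, π i * (c i + l i)) - ε * H π = f π + ∑ i, π i * l i := by
    intro l π
    simp only [hf, mul_add, Finset.sum_add_distrib]
    ring
  set T : Set ℝ := {r : ℝ | ∃ l ∈ L,
      r = sInf ((fun π => (∑ i, π i * (c i + l i)) - ε * H π) '' S)} with hT
  have hshiftcont : ∀ l : ι → ℝ,
      ContinuousOn (fun π => (∑ i, π i * (c i + l i)) - ε * H π) S :=
    fun l => ((hlincont _).continuousOn).sub (continuousOn_const.mul hHcont)
  have hTle : ∀ r ∈ T, r ≤ m := by
    rintro r ⟨l, hl, rfl⟩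
    have hbdd := (hScomp.image_of_continuousOn (hshiftcont l)).bddBelow
    have h1 : sInf ((fun π => (∑ i, π i * (c i + l i)) - ε * H π) '' S)
        ≤ (∑ i, πm i * (c i + l i)) - ε * H πm :=
      csInf_le hbdd (Set.mem_image_of_mem _ (hsub hπm))
    rw [hFeq] at h1
    have h2 : ∑ i, πm i * l i ≤ 0 := hpair πm hπm l hl
    linarith [h1, h2, hπmf.le, hπmf.ge]
  have hTne : T.Nonempty :=
    ⟨sInf ((fun π => (∑ i, π i * (c i + (0 : ι → ℝ) i)) - ε * H π) '' S), 0, h0L, rfl⟩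
  have hTbdd : BddAbove T := ⟨m, fun r hr => hTle r hr⟩
  refine le_antisymm ?_ (csSup_le hTne hTle)
  refine le_of_forall_pos_le_add ?_
  intro δ hδ
  -- core approximation claim
  have hcore : ∃ l ∈ L, ∀ π ∈ S, m - δ ≤ f π + ∑ i, π i * l i := by
    by_contra hcon
    push_neg at hcon
    set Z : L → Set (ι → ℝ) :=
      fun l => S ∩ {π | f π + ∑ i, π i * (l : ι → ℝ) i ≤ m - δ} with hZ
    have hZclosed : ∀ l : L, IsClosed (Z l) := by
      intro l
      have hcont' : ContinuousOn (fun π => f π + ∑ i, π i * (l : ι → ℝ) i) S :=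
        hfcont.add ((hlincont _).continuousOn)
      have hzz : Z l = S ∩ (fun π => f π + ∑ i, π i * (l : ι → ℝ) i) ⁻¹' Set.Iic (m - δ) := by
        ext π; simp [hZ]
      rw [hzz]
      exact hcont'.preimage_isClosed_of_isClosed hScomp.isClosed isClosed_Iic
    by_cases hint : (S ∩ ⋂ l : L, Z l).Nonempty
    · obtain ⟨πs, hπsS, hπsZ⟩ := hint
      have hall : ∀ l : L, ∑ i, πs i * (l : ι → ℝ) i ≤ m - δ - f πs := by
        intro l
        have := (Set.mem_iInter.mp hπsZ l).2
        simp only [Set.mem_setOf_eq] at this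
        linarith
      have hsup : (⨆ l : L, ((∑ i, πs i * (l : ι → ℝ) i : ℝ) : EReal))
          ≤ ((m - δ - f πs : ℝ) : EReal) :=
        iSup_le fun l => by exact_mod_cast hall l
      have hπs₀ : πs ∈ S₀ := by
        by_contra hn
        rw [hchar1 πs hπsS hn] at hsup
        exact EReal.coe_ne_top _ (top_le_iff.mp hsup)
      have hf0 : f πs + ∑ i, πs i * (0 : ι → ℝ) i ≤ m - δ := by
        have := (Set.mem_iInter.mp hπsZ ⟨0, h0L⟩).2
        simpa using this
      have := hm_le πs hπs₀
      simp at hf0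
      linarith
    · rw [Set.not_nonempty_iff_eq_empty] at hint
      obtain ⟨t, ht⟩ := hScomp.elim_finite_subfamily_closed Z hZclosed hint
      rcases t.eq_empty_or_nonempty with rfl | htne
      · simp only [Finset.notMem_empty, Set.iInter_of_empty, Set.iInter_univ,
          Set.inter_univ] at ht
        exact absurd ht hSne.ne_empty
      obtain ⟨j0, hj0⟩ := htne
      haveI : Nonempty {x // x ∈ t} := ⟨⟨j0, hj0⟩⟩
      set G : {x // x ∈ t} → (ι → ℝ) → ℝ :=
        fun j π => f π + ∑ i, π i * ((j : L) : ι → ℝ) i with hG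
      have hGconv : ∀ j, ConvexOn ℝ S (G j) := fun j => hfconv.add (hlinconv _)
      have hGcont : ∀ j, ContinuousOn (G j) S :=
        fun j => hfcont.add ((hlincont _).continuousOn)
      have hmix : ∀ lam : {x // x ∈ t} → ℝ, (∀ j, 0 ≤ lam j) → ∑ j, lam j = 1 →
          ∃ π ∈ S, ∑ j, lam j * G j π < m - δ := by
        intro lam hnn hs1
        set lmix : ι → ℝ := ∑ j, lam j • ((j : L) : ι → ℝ) with hlmix
        have hlmixL : lmix ∈ L :=
          hLconv.sum_mem (fun j _ => hnn j) hs1 (fun j _ => (j : L).2)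
        obtain ⟨π, hπ, hlt⟩ := hcon lmix hlmixL
        refine ⟨π, hπ, ?_⟩
        have key : ∑ j, lam j * G j π = f π + ∑ i, π i * lmix i := by
          simp only [hG, mul_add]
          rw [Finset.sum_add_distrib, ← Finset.sum_mul, hs1, one_mul]
          congr 1
          have hmixi : ∀ i, lmix i = ∑ j, lam j * ((j : L) : ι → ℝ) i := by
            intro i
            simp [hlmix, Finset.sum_apply]
          calc ∑ j, lam j * ∑ i, π i * ((j : L) : ι → ℝ) i
              = ∑ j, ∑ i, π i * (lam j * ((j : L) : ι → ℝ) i) := by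
                congr 1; funext j
                rw [Finset.mul_sum]; congr 1; funext i; ring
            _ = ∑ i, ∑ j, π i * (lam j * ((j : L) : ι → ℝ) i) := Finset.sum_comm
            _ = ∑ i, π i * lmix i := by
                congr 1; funext i
                rw [hmixi i, Finset.mul_sum]
        rw [key]
        exact hlt
      obtain ⟨πb, hπbS, hπb⟩ := sion_finite_aux S hScomp hSne G hGconv hGcont (m - δ) hmix
      have hmem : πb ∈ S ∩ ⋂ l ∈ t, Z l := by
        refine ⟨hπbS, Set.mem_iInter₂.mpr fun l hl => ⟨hπbS, ?_⟩⟩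
        have := hπb ⟨l, hl⟩
        simpa [hG] using this
      rw [ht] at hmem
      exact hmem
  obtain ⟨l, hl, hlo⟩ := hcore
  have hrT : sInf ((fun π => (∑ i, π i * (c i + l i)) - ε * H π) '' S) ∈ T := ⟨l, hl, rfl⟩
  have hmr : m - δ ≤ sInf ((fun π => (∑ i, π i * (c i + l i)) - ε * H π) '' S) := by
    refine le_csInf (hSne.image _) ?_
    rintro x ⟨π, hπ, rfl⟩
    show m - δ ≤ (∑ i, π i * (c i + l i)) - ε * H π
    rw [hFeq]
    exact hlo π hπ
  have := le_csSup hTbdd hrT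
  linarith
end
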